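/- arXiv:0902.3265 — 5 statements merged into one kernel-verified Lean document; each statement's English description precedes it below -/
import Mathlib

section
/- For all fixed reals d > 0 and ε > 0, asymptotically almost surely every subgraph G' of the Erdős–Rényi random graph G(n, d/n) with at least one vertex and at most (4d)^{−(1+1/ε)}·n vertices satisfies ‖G'‖/|G'| ≤ 1 + ε, where ‖G'‖ and |G'| denote the number of edges and vertices of G'. That is, the probability that G(n, d/n) contains a subgraph G' with 1 ≤ |G'| ≤ (4d)^{−(1+1/ε)}·n and ‖G'‖ > (1+ε)|G'| tends to 0 as n → ∞. -/
open SimpleGraph MeasureTheory Filter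

/-! ### Subdivisions -/

/-- A witness that the graph `H` is a subdivision of the graph `G`:  `H` is obtained from `G`
by replacing each edge `ab` of `G` by a path between (the copies of) `a` and `b` whose internal
(division) vertices are new and pairwise distinct. -/
structure SubdivisionWitness {V : Type*} {W : Type*} (G : SimpleGraph V) (H : SimpleGraph W) where
  emb : V ↪ W
  path : ∀ ⦃a b : V⦄, G.Adj a b → H.Walk (emb a) (emb b)
  path_isPath : ∀ ⦃a b : V⦄ (h : G.Adj a b), (path h).IsPath
  path_symm : ∀ ⦃a b : V⦄ (h : G.Adj a b), path h.symm = (path h).reverse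
  internal_new : ∀ ⦃a b : V⦄ (h : G.Adj a b) (x : V),
    emb x ∈ (path h).support → x = a ∨ x = b
  internally_disjoint : ∀ ⦃a b a' b' : V⦄ (h : G.Adj a b) (h' : G.Adj a' b'),
    s(a, b) ≠ s(a', b') → ∀ w : W, w ∈ (path h).support → w ∈ (path h').support →
      ∃ x : V, emb x = w
  vert_cover : ∀ w : W,
    (∃ x : V, emb x = w) ∨ ∃ (a b : V) (h : G.Adj a b), w ∈ (path h).support
  edge_cover : ∀ e ∈ H.edgeSet, ∃ (a b : V) (h : G.Adj a b), e ∈ (path h).edges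

/-- `H` is a subdivision of `G`. -/
def IsSubdivision {V W : Type*} (G : SimpleGraph V) (H : SimpleGraph W) : Prop :=
  Nonempty (SubdivisionWitness G H)

/-- `H` is a `(≤ t)`-subdivision of `G`: a subdivision with at most `t` division vertices
per edge (i.e. each replacing path has length at most `t + 1`). -/
def IsLESubdivision {V W : Type*} (t : ℕ) (G : SimpleGraph V) (H : SimpleGraph W) : Prop :=
  ∃ S : SubdivisionWitness G H, ∀ ⦃a b : V⦄ (h : G.Adj a b), (S.path h).length ≤ t + 1

/-- `H` is the `t`-subdivision of `G`: exactly `t` division vertices on each edge. -/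
def IsExactSubdivision {V W : Type*} (t : ℕ) (G : SimpleGraph V) (H : SimpleGraph W) : Prop :=
  ∃ S : SubdivisionWitness G H, ∀ ⦃a b : V⦄ (h : G.Adj a b), (S.path h).length = t + 1

/-! ### Shallow topological minors and the top-grad -/

/-- `H` is a shallow topological minor of `G` at depth `d`:  some `(≤ 2d)`-subdivision of `H`
is isomorphic to a subgraph of `G`. -/
def IsShallowTopMinor {W V : Type*} (d : ℕ) (H : SimpleGraph W) (G : SimpleGraph V) : Prop :=
  ∃ (m : ℕ) (S : SimpleGraph (Fin m)),
    IsLESubdivision (2 * d) H S ∧ ∃ f : S →g G, Function.Injective f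

/-- The topological greatest reduced average density (top-grad) `∇̃_d(G)` of rank `d`:
the maximum of `‖H‖/|H|` over all shallow topological minors `H` of `G` at depth `d`
with at least one vertex. -/
noncomputable def topGrad {V : Type*} (d : ℕ) (G : SimpleGraph V) : ℝ :=
  sSup {q : ℝ | ∃ (m : ℕ) (H : SimpleGraph (Fin m)), 0 < m ∧
    IsShallowTopMinor d H G ∧ q = (Nat.card H.edgeSet : ℝ) / m}

/-! ### Shallow minors, the grad, and bounded expansion -/

/-- `H` is a shallow minor of `G` at depth `d`: it is obtained from `G` by contracting
pairwise disjoint connected subgraphs (branch sets) of radius at most `d` and taking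
a simple subgraph of the result. -/
def IsShallowMinor {W V : Type*} (d : ℕ) (H : SimpleGraph W) (G : SimpleGraph V) : Prop :=
  ∃ B : W → Set V,
    (∀ i, (B i).Nonempty) ∧
    (∀ i j, i ≠ j → Disjoint (B i) (B j)) ∧
    (∀ i : W, ∃ c : (B i), ∀ v : (B i), ∃ p : (G.induce (B i)).Walk c v, p.length ≤ d) ∧
    (∀ i j : W, H.Adj i j → ∃ u ∈ B i, ∃ v ∈ B j, G.Adj u v)

/-- The greatest reduced average density (grad) `∇_d(G)` of rank `d`. -/
noncomputable def grad {V : Type*} (d : ℕ) (G : SimpleGraph V) : ℝ :=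
  sSup {q : ℝ | ∃ (m : ℕ) (H : SimpleGraph (Fin m)), 0 < m ∧
    IsShallowMinor d H G ∧ q = (Nat.card H.edgeSet : ℝ) / m}

/-- A class of finite simple graphs, represented by graphs on `Fin n` for all `n`. -/
abbrev GraphClass := Set ((n : ℕ) × SimpleGraph (Fin n))

/-- A class of graphs has bounded expansion if `∇_d` is bounded on the class by a
function of `d`. -/
def BoundedExpansion (C : GraphClass) : Prop :=
  ∃ f : ℕ → ℝ, ∀ G ∈ C, ∀ d : ℕ, grad d G.2 ≤ f d

/-! ### Graph parameters -/

/-- A graph parameter is isomorphism-invariant. -/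
def IsoInvariant (α : ((n : ℕ) × SimpleGraph (Fin n)) → ℝ) : Prop :=
  ∀ G H : (n : ℕ) × SimpleGraph (Fin n), Nonempty (G.2 ≃g H.2) → α G = α H

/-- A graph parameter is strongly topological: `α(G)` and `α(H)` bound each other through a
fixed non-decreasing function, whenever `H` is a `(≤1)`-subdivision of `G`. -/
def StronglyTopological (α : ((n : ℕ) × SimpleGraph (Fin n)) → ℝ) : Prop :=
  ∃ f : ℝ → ℝ, Monotone f ∧ ∀ G H : (n : ℕ) × SimpleGraph (Fin n),
    IsLESubdivision 1 G.2 H.2 → α G ≤ f (α H) ∧ α H ≤ f (α G)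

/-- A graph parameter is monotone: it does not increase when passing to a subgraph. -/
def MonotoneParam (α : ((n : ℕ) × SimpleGraph (Fin n)) → ℝ) : Prop :=
  ∀ G H : (n : ℕ) × SimpleGraph (Fin n),
    (∃ f : H.2 →g G.2, Function.Injective f) → α H ≤ α G

/-- A graph parameter is degree-bound: every nonempty graph has a vertex of degree at most
`f(α(G))` for some fixed function `f`. -/
def DegreeBound (α : ((n : ℕ) × SimpleGraph (Fin n)) → ℝ) : Prop :=
  ∃ f : ℝ → ℝ, ∀ G : (n : ℕ) × SimpleGraph (Fin n), 0 < G.1 →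
    ∃ v : Fin G.1, (Nat.card (G.2.neighborSet v) : ℝ) ≤ f (α G)

/-! ### Queue and stack layouts -/

/-- A `k`-queue layout of `G` with respect to the linear order on `V`: an assignment of the
(potential) edges to `k` queues so that no two edges in a common queue are nested. -/
def IsQueueLayout {V : Type*} [LinearOrder V] (G : SimpleGraph V) (k : ℕ)
    (q : Sym2 V → Fin k) : Prop :=
  ∀ ⦃a b c d : V⦄, G.Adj a b → G.Adj c d → a < b → c < d →
    q s(a, b) = q s(c, d) → ¬(a < c ∧ d < b)

/-- The signed queue function `Q`:  `Q(v,w) = q(vw)` if `v < w` and `Q(v,w) = -q(vw)`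
if `w < v` (queues are numbered `1,…,k`). -/
def signedQueue {V : Type*} [LinearOrder V] {k : ℕ} (q : Sym2 V → Fin k) (v w : V) : ℤ :=
  if v < w then ((q s(v, w) : ℕ) : ℤ) + 1 else -(((q s(v, w) : ℕ) : ℤ) + 1)

/-- `G` admits a `k`-queue layout (for some vertex ordering). -/
def HasQueueLayout {V : Type*} (G : SimpleGraph V) (k : ℕ) : Prop :=
  ∃ (ord : LinearOrder V) (q : Sym2 V → Fin k), @IsQueueLayout V ord G k q

/-- A `k`-stack layout of `G` with respect to the linear order on `V`: an assignment of the
(potential) edges to `k` stacks so that no two edges in a common stack cross. -/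
def IsStackLayout {V : Type*} [LinearOrder V] (G : SimpleGraph V) (k : ℕ)
    (q : Sym2 V → Fin k) : Prop :=
  ∀ ⦃a b c d : V⦄, G.Adj a b → G.Adj c d → a < b → c < d →
    q s(a, b) = q s(c, d) → ¬(a < c ∧ c < b ∧ b < d)

/-- `G` admits a `k`-stack layout (for some vertex ordering). -/
def HasStackLayout {V : Type*} (G : SimpleGraph V) (k : ℕ) : Prop :=
  ∃ (ord : LinearOrder V) (q : Sym2 V → Fin k), @IsStackLayout V ord G k q

/-! ### Contracting the components of a subgraph -/

/-- The equivalence relation on `V(G)` identifying the vertices in a common connected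
component of the subgraph `F`. -/
def contractSetoid {V : Type*} {G : SimpleGraph V} (F : G.Subgraph) : Setoid V where
  r u v := u = v ∨ ∃ (hu : u ∈ F.verts) (hv : v ∈ F.verts),
    F.coe.Reachable ⟨u, hu⟩ ⟨v, hv⟩
  iseqv := by
    refine ⟨fun x => Or.inl rfl, ?_, ?_⟩
    · rintro x y (rfl | ⟨hx, hy, h⟩)
      · exact Or.inl rfl
      · exact Or.inr ⟨hy, hx, h.symm⟩
    · rintro x y z (rfl | ⟨hx, hy, h⟩) hyz
      · exact hyz
      · rcases hyz with (rfl | ⟨hy', hz, h'⟩)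
        · exact Or.inr ⟨hx, hy, h⟩
        · exact Or.inr ⟨hx, hz, h.trans h'⟩

/-- The simple graph obtained from `G` by contracting each connected component of the
subgraph `F` to a single vertex (deleting loops and parallel edges). -/
def contractGraph {V : Type*} {G : SimpleGraph V} (F : G.Subgraph) :
    SimpleGraph (Quotient (contractSetoid F)) where
  Adj A B := A ≠ B ∧ ∃ u v : V, G.Adj u v ∧
    Quotient.mk (contractSetoid F) u = A ∧ Quotient.mk (contractSetoid F) v = B
  symm := by
    constructor
    rintro A B ⟨hne, u, v, h, hu, hv⟩
    exact ⟨hne.symm, v, u, h.symm, hv, hu⟩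
  loopless := by
    constructor
    rintro A ⟨hne, -⟩
    exact hne rfl

/-! ### Non-repetitive and acyclic colourings -/

/-- A colouring `f` of `G` is non-repetitive if there is no path `v₀, …, v_{2s-1}` in `G`
(`s ≥ 1`, vertices pairwise distinct, consecutive vertices adjacent) with
`f(v_i) = f(v_{i+s})` for all `i < s`. -/
def NonRepColoring {V α : Type*} (G : SimpleGraph V) (f : V → α) : Prop :=
  ∀ s : ℕ, 0 < s → ∀ v : ℕ → V,
    (∀ i, i < 2 * s → ∀ j, j < 2 * s → i ≠ j → v i ≠ v j) →
    (∀ i, i + 1 < 2 * s → G.Adj (v i) (v (i + 1))) →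
    ¬(∀ i, i < s → f (v i) = f (v (i + s)))

/-- `π(G)`: the minimum number of colours in a non-repetitive colouring of `G`. -/
noncomputable def piNum {V : Type*} (G : SimpleGraph V) : ℕ :=
  sInf {k : ℕ | ∃ f : V → Fin k, NonRepColoring G f}

/-- A proper colouring of `G` with no bichromatic cycle (every cycle receives at least
three colours). -/
def AcyclicColoring {V α : Type*} (G : SimpleGraph V) (f : V → α) : Prop :=
  (∀ u w : V, G.Adj u w → f u ≠ f w) ∧
  ∀ (u : V) (c : G.Walk u u), c.IsCycle →
    ∃ x ∈ c.support, ∃ y ∈ c.support, ∃ z ∈ c.support, f x ≠ f y ∧ f x ≠ f z ∧ f y ≠ f z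

/-- `χₐ(G)`: the acyclic chromatic number of `G`. -/
noncomputable def chiA {V : Type*} (G : SimpleGraph V) : ℕ :=
  sInf {k : ℕ | ∃ f : V → Fin k, AcyclicColoring G f}

/-! ### The Erdős–Rényi random graph `G(n, p)` -/

/-- The Erdős–Rényi measure: each potential edge (coordinate) is present independently with
probability `p` (truncated to `[0,1]`). -/
noncomputable def erdosRenyi (n : ℕ) (p : ℝ) : Measure (Sym2 (Fin n) → Bool) :=
  Measure.pi fun _ =>
    ((PMF.bernoulli (min (Real.toNNReal p) 1) (min_le_right _ _)).toMeasure)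

/-- The simple graph on `Fin n` determined by an outcome `ω` of the edge indicators. -/
def graphOf {n : ℕ} (ω : Sym2 (Fin n) → Bool) : SimpleGraph (Fin n) where
  Adj u v := u ≠ v ∧ ω s(u, v) = true
  symm := by
    constructor
    rintro u v ⟨hne, h⟩
    exact ⟨hne.symm, by rwa [Sym2.eq_swap]⟩
  loopless := by
    constructor
    rintro u ⟨hne, -⟩
    exact hne rfl

open scoped ENNReal

lemma pow_self_le_factorial_mul (k : ℕ) : (k:ℝ)^k ≤ (k.factorial : ℝ) * Real.exp 1 ^ k := by
  have h := Real.sum_le_exp_of_nonneg (x := (k:ℝ)) (by positivity) (k+1)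
  have h2 : ((k:ℝ))^k / (k.factorial : ℝ) ≤ Real.exp k := by
    refine le_trans ?_ h
    exact Finset.single_le_sum (f := fun i => (k:ℝ)^i / (i.factorial:ℝ)) (fun i _ => by positivity) (Finset.self_mem_range_succ k)
  have h3 : Real.exp (k:ℝ) = Real.exp 1 ^ k := by
    rw [← Real.exp_nat_mul]; norm_num
  rw [div_le_iff₀ (by positivity)] at h2
  rw [h3] at h2; linarith [h2]

lemma choose_le_enk {n k : ℕ} (hk : 1 ≤ k) (hn : 1 ≤ n) :
    (n.choose k : ℝ) ≤ (Real.exp 1 * n / k) ^ k := by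
  have h1 : (n.choose k : ℝ) ≤ (n:ℝ)^k / (k.factorial : ℝ) := Nat.choose_le_pow_div k n
  refine h1.trans ?_
  have hkpos : (0:ℝ) < k := by exact_mod_cast hk
  have hf : (0:ℝ) < (k.factorial : ℝ) := by exact_mod_cast k.factorial_pos
  rw [div_le_iff₀ hf]
  have : (Real.exp 1 * n / k)^k * (k.factorial:ℝ) * (k:ℝ)^k
      = (Real.exp 1 ^ k * (n:ℝ)^k) * (k.factorial:ℝ) := by
    rw [div_pow, mul_pow]
    field_simp
  have h2 := pow_self_le_factorial_mul k
  have hpos : (0:ℝ) ≤ (Real.exp 1 * n / k)^k := by positivity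
  -- n^k * k^k ≤ (e n/k)^k * k! * k^k
  have key : (n:ℝ)^k * (k:ℝ)^k ≤ (Real.exp 1 * n / k)^k * (k.factorial:ℝ) * (k:ℝ)^k := by
    rw [this]
    calc (n:ℝ)^k * (k:ℝ)^k ≤ (n:ℝ)^k * ((k.factorial:ℝ) * Real.exp 1 ^ k) := by
          exact mul_le_mul_of_nonneg_left h2 (by positivity)
      _ = (Real.exp 1 ^ k * (n:ℝ)^k) * (k.factorial:ℝ) := by ring
  exact le_of_mul_le_mul_right key (by positivity)

set_option maxHeartbeats 2000000 in
open Real Finset in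
lemma real_sum_bound (d ε : ℝ) (hd : 0 < d) (hε : 0 < ε) :
    ∃ CC : ℝ, 0 ≤ CC ∧ ∀ n : ℕ, 1 ≤ n →
      ∑ k ∈ Finset.Icc 1 (Nat.floor ((4*d) ^ (-(1+1/ε)) * (n:ℝ))),
        (n.choose k : ℝ) * (((k.choose 2).choose (Nat.floor ((1+ε)*(k:ℝ))+1)) : ℝ)
          * (d/(n:ℝ))^(Nat.floor ((1+ε)*(k:ℝ))+1)
      ≤ CC * (n:ℝ) ^ (-ε) := by
  set e := Real.exp 1 with he_def
  have he : 0 < e := Real.exp_pos 1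
  have h4d : (0:ℝ) < 4*d := by linarith
  set c : ℝ := (4*d) ^ (-(1+1/ε)) with hc_def
  have hc : 0 < c := Real.rpow_pos_of_pos h4d _
  have h1ε : (0:ℝ) < 1+ε := by linarith
  set r : ℝ := e/(8*(1+ε)) with hr_def
  have hr0 : 0 < r := by positivity
  have hr1 : r < 1/e := by
    rw [hr_def, div_lt_div_iff₀ (by positivity) he]
    nlinarith [Real.exp_one_lt_d9]
  have hrle1 : r ≤ 1 := by
    rw [hr_def, div_le_one (by positivity)]
    nlinarith [Real.exp_one_lt_d9]
  set A : ℝ := e * (e*d/(2*(1+ε))) ^ ((1:ℝ)+ε) with hA_def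
  set q : ℝ := A * c ^ ε with hq_def
  have hq0 : 0 ≤ q := by positivity
  have hcε : c ^ ε = (4*d) ^ (-(1+ε)) := by
    rw [hc_def, ← Real.rpow_mul h4d.le]
    congr 1
    field_simp
    ring
  have hq_eq : q = e * r ^ ((1:ℝ)+ε) := by
    have hdiv : (e*d/(2*(1+ε)))/(4*d) = r := by rw [hr_def]; field_simp; ring
    calc q = (e*d/(2*(1+ε)))^((1:ℝ)+ε) / (4*d)^((1:ℝ)+ε) * e := by
            rw [hq_def, hA_def, hcε, Real.rpow_neg h4d.le]; ring
      _ = ((e*d/(2*(1+ε)))/(4*d))^((1:ℝ)+ε) * e := by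
            rw [Real.div_rpow (by positivity) h4d.le]
      _ = e * r^((1:ℝ)+ε) := by rw [hdiv]; ring
  have hq1 : q < 1 := by
    rw [hq_eq]
    have h1 : r ^ ((1:ℝ)+ε) ≤ r := by
      calc r^((1:ℝ)+ε) ≤ r^(1:ℝ) := Real.rpow_le_rpow_of_exponent_ge hr0 hrle1 (by linarith)
        _ = r := Real.rpow_one r
    calc e * r^((1:ℝ)+ε) ≤ e * r := by nlinarith
      _ < e * (1/e) := by exact mul_lt_mul_of_pos_left hr1 he
      _ = 1 := by field_simp
  set B : ℝ := max 1 (e*c*d/(2*(1+ε))) with hB_def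
  have hB1 : (1:ℝ) ≤ B := le_max_left _ _
  have hB0 : (0:ℝ) < B := lt_of_lt_of_le one_pos hB1
  set M : ℕ := ⌈ε⌉₊ with hM_def
  have hsummable : Summable (fun k : ℕ => (k:ℝ)^M * q^k) := by
    have hnq : ‖q‖ < 1 := by rw [Real.norm_eq_abs, abs_of_nonneg hq0]; exact hq1
    exact summable_pow_mul_geometric_of_norm_lt_one M hnq
  set D : ℝ := ∑' k : ℕ, (k:ℝ)^M * q^k with hD_def
  have hD0 : 0 ≤ D := tsum_nonneg fun k => by positivity
  refine ⟨B * D / c ^ ε, by positivity, ?_⟩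
  intro n hn
  have hn0 : (0:ℝ) < n := by exact_mod_cast hn
  have hterm : ∀ k ∈ Finset.Icc 1 (Nat.floor (c * (n:ℝ))),
      (n.choose k : ℝ) * (((k.choose 2).choose (Nat.floor ((1+ε)*(k:ℝ))+1)) : ℝ)
        * (d/(n:ℝ))^(Nat.floor ((1+ε)*(k:ℝ))+1)
      ≤ B * q^k * ((k:ℝ)^M / (c*n)^ε) := by
    intro k hk
    obtain ⟨hk1, hkK⟩ := Finset.mem_Icc.mp hk
    have hk0 : (0:ℝ) < k := by exact_mod_cast hk1
    have hkc : (k:ℝ) ≤ c * n := by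
      have h1 := Nat.floor_le (by positivity : (0:ℝ) ≤ c*n)
      exact le_trans (by exact_mod_cast hkK) h1
    set m : ℕ := ⌊(1+ε)*(k:ℝ)⌋₊ + 1 with hm_def
    have hm_lb : (1+ε)*(k:ℝ) < m := by
      rw [hm_def]; push_cast; exact Nat.lt_floor_add_one _
    have hm_ub : (m:ℝ) ≤ (1+ε)*k + 1 := by
      rw [hm_def]; push_cast
      have := Nat.floor_le (by positivity : (0:ℝ) ≤ (1+ε)*k)
      linarith
    have hm0 : (0:ℝ) < m := lt_trans (by positivity) hm_lb
    have hmnat : 0 < m := by exact_mod_cast hm0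
    set x : ℝ := e*k*d/(2*(1+ε)*n) with hx_def
    have hx0 : 0 < x := by positivity
    have step1 : (n.choose k : ℝ) ≤ (e*n/k)^k := choose_le_enk hk1 hn
    have hNk : 2*((k.choose 2 : ℕ):ℝ) ≤ (k:ℝ)*k := by
      have h1 : 2 * (k.choose 2) ≤ k * k := by
        rw [Nat.choose_two_right]
        calc 2 * (k*(k-1)/2) = (k*(k-1)/2) * 2 := by ring
          _ ≤ k*(k-1) := Nat.div_mul_le_self _ _
          _ ≤ k*k := Nat.mul_le_mul_left k (Nat.sub_le _ _)
      exact_mod_cast h1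
    have step2 : (((k.choose 2).choose m : ℕ):ℝ) * (d/(n:ℝ))^m ≤ x^m := by
      have h1 : (((k.choose 2).choose m : ℕ):ℝ) ≤ ((k.choose 2 : ℕ):ℝ)^m / (m.factorial : ℝ) :=
        Nat.choose_le_pow_div m _
      have hfac : ((m:ℝ))^m ≤ (m.factorial:ℝ) * e^m := pow_self_le_factorial_mul m
      have hfacpos : (0:ℝ) < (m.factorial:ℝ) := by exact_mod_cast m.factorial_pos
      have h2 : (((k.choose 2).choose m : ℕ):ℝ) * (d/(n:ℝ))^m
          ≤ (((k.choose 2:ℕ):ℝ) * (d/n))^m / (m.factorial:ℝ) := by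
        calc (((k.choose 2).choose m : ℕ):ℝ) * (d/(n:ℝ))^m
            ≤ (((k.choose 2:ℕ):ℝ)^m / (m.factorial:ℝ)) * (d/n)^m :=
              mul_le_mul_of_nonneg_right h1 (by positivity)
          _ = (((k.choose 2:ℕ):ℝ) * (d/n))^m / (m.factorial:ℝ) := by
              rw [mul_pow]; ring
      have h3 : (((k.choose 2:ℕ):ℝ) * (d/n))^m / (m.factorial:ℝ)
          ≤ (e*(((k.choose 2:ℕ):ℝ) * (d/n))/m)^m := by
        rw [div_le_iff₀ hfacpos]
        have heq : (e*(((k.choose 2:ℕ):ℝ) * (d/n))/m)^m * (m.factorial:ℝ)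
            = (((k.choose 2:ℕ):ℝ) * (d/n))^m * ((m.factorial:ℝ) * e^m / (m:ℝ)^m) := by
          rw [div_pow, mul_pow]; field_simp
        rw [heq]
        have h4 : (1:ℝ) ≤ (m.factorial:ℝ) * e^m / (m:ℝ)^m := by
          rw [le_div_iff₀ (by positivity)]
          linarith
        nlinarith [pow_nonneg (by positivity : (0:ℝ) ≤ ((k.choose 2:ℕ):ℝ) * (d/n)) m]
      have h5 : e*(((k.choose 2:ℕ):ℝ) * (d/n))/m ≤ x := by
        rw [hx_def, div_le_div_iff₀ hm0 (by positivity)]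
        have hkm : (1+ε)*(k:ℝ)*(k:ℝ) ≤ (k:ℝ)*m := by nlinarith
        have expand : e*(((k.choose 2:ℕ):ℝ) * (d/n)) * (2*(1+ε)*n)
            = e*d*(2*(1+ε))*((k.choose 2:ℕ):ℝ) := by field_simp
        rw [expand]
        nlinarith [mul_le_mul_of_nonneg_left hNk (by positivity : (0:ℝ) ≤ e*d*(1+ε)),
          mul_le_mul_of_nonneg_left hkm (by positivity : (0:ℝ) ≤ e*d)]
      calc (((k.choose 2).choose m : ℕ):ℝ) * (d/(n:ℝ))^m
          ≤ (((k.choose 2:ℕ):ℝ) * (d/n))^m / (m.factorial:ℝ) := h2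
        _ ≤ (e*(((k.choose 2:ℕ):ℝ) * (d/n))/m)^m := h3
        _ ≤ x^m := pow_le_pow_left₀ (by positivity) h5 m
    have step3 : x^m ≤ B * x^((1+ε)*(k:ℝ)) := by
      have hxm : x^m = x^((m:ℝ)) := (Real.rpow_natCast x m).symm
      by_cases hx1 : x ≤ 1
      · rw [hxm]
        calc x^((m:ℝ)) ≤ x^((1+ε)*(k:ℝ)) :=
              Real.rpow_le_rpow_of_exponent_ge hx0 hx1 hm_lb.le
          _ ≤ B * x^((1+ε)*(k:ℝ)) :=
              le_mul_of_one_le_left (Real.rpow_nonneg hx0.le _) hB1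
      · push_neg at hx1
        have hxB : x ≤ B := by
          have hxc : x ≤ e*c*d/(2*(1+ε)) := by
            rw [hx_def, div_le_div_iff₀ (by positivity) (by positivity)]
            nlinarith [mul_le_mul_of_nonneg_left hkc (by positivity : (0:ℝ) ≤ e*d*(2*(1+ε)))]
          exact hxc.trans (le_max_right _ _)
        rw [hxm]
        calc x^((m:ℝ)) ≤ x^((1+ε)*(k:ℝ)+1) :=
              Real.rpow_le_rpow_of_exponent_le hx1.le hm_ub
          _ = x * x^((1+ε)*(k:ℝ)) := by rw [Real.rpow_add hx0, Real.rpow_one]; ring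
          _ ≤ B * x^((1+ε)*(k:ℝ)) :=
              mul_le_mul_of_nonneg_right hxB (Real.rpow_nonneg hx0.le _)
    have step4 : (e*(n:ℝ)/k)^k * x^((1+ε)*(k:ℝ)) = (A * ((k:ℝ)/n)^ε)^k := by
      have hxsplit : x = (e*d/(2*(1+ε))) * ((k:ℝ)/n) := by rw [hx_def]; field_simp
      have h3 : x^((1+ε)*(k:ℝ)) = (x^((1:ℝ)+ε))^k := by
        rw [show ((1:ℝ)+ε)*(k:ℝ) = (1+ε)*(k:ℝ) from rfl, Real.rpow_mul hx0.le,
          Real.rpow_natCast]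
      rw [h3, ← mul_pow]
      congr 1
      have h1 : x^((1:ℝ)+ε) = (e*d/(2*(1+ε)))^((1:ℝ)+ε) * ((k:ℝ)/n)^((1:ℝ)+ε) := by
        rw [hxsplit, Real.mul_rpow (by positivity) (by positivity)]
      have h2 : ((k:ℝ)/n)^((1:ℝ)+ε) = ((k:ℝ)/n) * ((k:ℝ)/n)^ε := by
        rw [Real.rpow_add (by positivity), Real.rpow_one]
      rw [h1, h2, hA_def]
      field_simp
    have step5 : (A * ((k:ℝ)/n)^ε)^k ≤ q^k * ((k:ℝ)^M / (c*n)^ε) := by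
      have ht_def : A*((k:ℝ)/n)^ε = q * ((k:ℝ)/(c*n))^ε := by
        rw [hq_def]
        have hsp : (k:ℝ)/n = c * ((k:ℝ)/(c*n)) := by field_simp
        rw [hsp, Real.mul_rpow hc.le (by positivity)]
        ring
      have ht0 : 0 ≤ ((k:ℝ)/(c*n))^ε := Real.rpow_nonneg (by positivity) _
      have ht1 : ((k:ℝ)/(c*n))^ε ≤ 1 :=
        Real.rpow_le_one (by positivity)
          (by rw [div_le_one (by positivity)]; exact hkc) hε.le
      rw [ht_def, mul_pow]
      apply mul_le_mul_of_nonneg_left ?_ (pow_nonneg hq0 k)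
      calc (((k:ℝ)/(c*n))^ε)^k ≤ ((k:ℝ)/(c*n))^ε := pow_le_of_le_one ht0 ht1 (by omega)
        _ = (k:ℝ)^ε / (c*n)^ε := Real.div_rpow (by positivity) (by positivity) ε
        _ ≤ (k:ℝ)^M / (c*n)^ε := by
            have hkM : (k:ℝ)^ε ≤ (k:ℝ)^M := by
              have h6 : (k:ℝ)^ε ≤ (k:ℝ)^((M:ℕ):ℝ) :=
                Real.rpow_le_rpow_of_exponent_le (by exact_mod_cast hk1) (Nat.le_ceil ε)
              rwa [Real.rpow_natCast] at h6
            gcongr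
    calc (n.choose k : ℝ) * (((k.choose 2).choose m : ℕ):ℝ) * (d/(n:ℝ))^m
        = (n.choose k : ℝ) * ((((k.choose 2).choose m : ℕ):ℝ) * (d/(n:ℝ))^m) := by ring
      _ ≤ (e*(n:ℝ)/k)^k * (x^m) := by
          apply mul_le_mul step1 step2 (by positivity) (by positivity)
      _ ≤ (e*(n:ℝ)/k)^k * (B * x^((1+ε)*(k:ℝ))) := by
          apply mul_le_mul_of_nonneg_left step3 (by positivity)
      _ = B * ((e*(n:ℝ)/k)^k * x^((1+ε)*(k:ℝ))) := by ring
      _ = B * (A * ((k:ℝ)/n)^ε)^k := by rw [step4]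
      _ ≤ B * (q^k * ((k:ℝ)^M / (c*n)^ε)) := by
          apply mul_le_mul_of_nonneg_left step5 hB0.le
      _ = B * q^k * ((k:ℝ)^M / (c*n)^ε) := by ring
  calc ∑ k ∈ Finset.Icc 1 (Nat.floor (c * (n:ℝ))),
        (n.choose k : ℝ) * (((k.choose 2).choose (Nat.floor ((1+ε)*(k:ℝ))+1)) : ℝ)
          * (d/(n:ℝ))^(Nat.floor ((1+ε)*(k:ℝ))+1)
      ≤ ∑ k ∈ Finset.Icc 1 (Nat.floor (c * (n:ℝ))), B * q^k * ((k:ℝ)^M / (c*n)^ε) :=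
        Finset.sum_le_sum hterm
    _ = (B/(c*n)^ε) * ∑ k ∈ Finset.Icc 1 (Nat.floor (c * (n:ℝ))), (k:ℝ)^M * q^k := by
        rw [Finset.mul_sum]
        exact Finset.sum_congr rfl fun k _ => by ring
    _ ≤ (B/(c*n)^ε) * D := by
        apply mul_le_mul_of_nonneg_left ?_ (by positivity)
        exact hsummable.sum_le_tsum _ (fun k _ => by positivity)
    _ = B * D / c ^ ε * (n:ℝ)^(-ε) := by
        rw [Real.mul_rpow hc.le hn0.le, Real.rpow_neg hn0.le]
        field_simp

lemma card_sym2_nondiag {α : Type*} [DecidableEq α] (S : Finset α) :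
    ((S.sym2).filter (fun e => ¬ e.IsDiag)).card = S.card.choose 2 := by
  have hdiag : (S.sym2).filter (fun e => e.IsDiag) = S.image Sym2.diag := by
    ext e
    induction e using Sym2.ind with
    | _ x y =>
      simp only [Finset.mem_filter, Finset.mk_mem_sym2_iff, Finset.mem_image, Sym2.mk_isDiag_iff]
      constructor
      · rintro ⟨⟨hx, _⟩, rfl⟩
        exact ⟨x, hx, rfl⟩
      · rintro ⟨a, ha, h⟩
        have h' : s(a, a) = s(x, y) := h
        rw [Sym2.eq_iff] at h'
        rcases h' with ⟨rfl, rfl⟩ | ⟨rfl, rfl⟩ <;> exact ⟨⟨ha, ha⟩, rfl⟩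
  have h := Finset.card_filter_add_card_filter_not
    (s := S.sym2) (p := fun e => e.IsDiag)
  rw [hdiag, Finset.card_image_of_injective S Sym2.diag_injective, Finset.card_sym2] at h
  have hch : (S.card+1).choose 2 = S.card + S.card.choose 2 := by
    rw [show (2:ℕ) = 1 + 1 from rfl, Nat.choose_succ_succ, Nat.choose_one_right]
  omega

open Finset in
lemma erdos_bound (d ε : ℝ) (hd : 0 < d) (hε : 0 < ε) (n : ℕ) :
    erdosRenyi n (d/n) {ω | ∃ H : (graphOf ω).Subgraph,
        1 ≤ Nat.card H.verts ∧
        (Nat.card H.verts : ℝ) ≤ (4*d) ^ (-(1+1/ε)) * n ∧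
        (1+ε) * (Nat.card H.verts : ℝ) < (Nat.card H.edgeSet : ℝ)}
    ≤ ENNReal.ofReal (∑ k ∈ Finset.Icc 1 (Nat.floor ((4*d) ^ (-(1+1/ε)) * (n:ℝ))),
        (n.choose k : ℝ) * (((k.choose 2).choose (Nat.floor ((1+ε)*(k:ℝ))+1)) : ℝ)
          * (d/(n:ℝ))^(Nat.floor ((1+ε)*(k:ℝ))+1)) := by
  classical
  set K := Nat.floor ((4*d) ^ (-(1+1/ε)) * (n:ℝ)) with hK_def
  set mf : ℕ → ℕ := fun k => Nat.floor ((1+ε)*(k:ℝ))+1 with hmf_def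
  set pm : ℝ≥0∞ := ((min (Real.toNNReal (d/(n:ℝ))) 1 : NNReal) : ℝ≥0∞) with hpm_def
  set A : Finset (Sym2 (Fin n)) → Set (Sym2 (Fin n) → Bool) :=
    fun T => {ω | ∀ e ∈ T, ω e = true} with hA_def
  set edges : Finset (Fin n) → Finset (Sym2 (Fin n)) :=
    fun S => (S.sym2).filter (fun e => ¬ e.IsDiag) with hedges_def
  have hA : ∀ T, erdosRenyi n (d/(n:ℝ)) (A T) = pm ^ T.card := by
    intro T
    have hset : A T = Set.pi Set.univ
        (fun e => if e ∈ T then ({true} : Set Bool) else Set.univ) := by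
      ext ω
      simp only [hA_def, Set.mem_setOf_eq, Set.mem_pi, Set.mem_univ, forall_true_left]
      constructor
      · intro h e
        by_cases he : e ∈ T
        · simp [he, h e he]
        · simp [he]
      · intro h e he
        have h2 := h e
        simpa [he] using h2
    rw [hset, erdosRenyi, Measure.pi_pi]
    have hfac : ∀ e : Sym2 (Fin n),
        ((PMF.bernoulli (min (Real.toNNReal (d/(n:ℝ))) 1) (min_le_right _ _)).toMeasure)
          (if e ∈ T then ({true}:Set Bool) else Set.univ) = if e ∈ T then pm else 1 := by
      intro e
      split_ifs with he
      · rw [PMF.toMeasure_apply_singleton _ _ (measurableSet_singleton _)]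
        rfl
      · exact measure_univ
    rw [Finset.prod_congr rfl (fun e _ => hfac e), Finset.prod_ite_mem,
      Finset.univ_inter, Finset.prod_const]
  have hsub : {ω : Sym2 (Fin n) → Bool | ∃ H : (graphOf ω).Subgraph,
        1 ≤ Nat.card H.verts ∧
        (Nat.card H.verts : ℝ) ≤ (4*d) ^ (-(1+1/ε)) * n ∧
        (1+ε) * (Nat.card H.verts : ℝ) < (Nat.card H.edgeSet : ℝ)}
      ⊆ ⋃ k ∈ Finset.Icc 1 K, ⋃ S ∈ Finset.powersetCard k (Finset.univ : Finset (Fin n)),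
          ⋃ T ∈ Finset.powersetCard (mf k) (edges S), A T := by
    rintro ω ⟨H, h1, h2, h3⟩
    set k := Nat.card H.verts with hk_def
    have hVfin : H.verts.Finite := Set.toFinite _
    have hEfin : H.edgeSet.Finite := Set.toFinite _
    have hScard : hVfin.toFinset.card = k := by
      rw [hk_def, Nat.card_coe_set_eq, Set.ncard_eq_toFinset_card _ hVfin]
    have hEcard : hEfin.toFinset.card = Nat.card H.edgeSet := by
      rw [Nat.card_coe_set_eq, Set.ncard_eq_toFinset_card _ hEfin]
    have hmk : mf k ≤ hEfin.toFinset.card := by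
      rw [hEcard]
      have hlt : Nat.floor ((1+ε)*(k:ℝ)) < Nat.card H.edgeSet :=
        (Nat.floor_lt (by positivity)).mpr h3
      simp only [hmf_def]
      omega
    obtain ⟨T, hTsub, hTcard⟩ := Finset.exists_subset_card_eq hmk
    have hTedge : ∀ e ∈ T, e ∈ H.edgeSet := fun e he => hEfin.mem_toFinset.mp (hTsub he)
    refine Set.mem_iUnion₂.mpr ⟨k, ?_, Set.mem_iUnion₂.mpr ⟨hVfin.toFinset, ?_,
      Set.mem_iUnion₂.mpr ⟨T, ?_, ?_⟩⟩⟩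
    · rw [Finset.mem_Icc]
      exact ⟨h1, Nat.le_floor h2⟩
    · exact Finset.mem_powersetCard_univ.mpr hScard
    · rw [Finset.mem_powersetCard]
      refine ⟨?_, hTcard⟩
      intro e he
      have heH := hTedge e he
      induction e using Sym2.ind with
      | _ u v =>
        have hadj : H.Adj u v := SimpleGraph.Subgraph.mem_edgeSet.mp heH
        have hu : u ∈ H.verts := H.edge_vert hadj
        have hv : v ∈ H.verts := H.edge_vert hadj.symm
        have hne : u ≠ v := (H.adj_sub hadj).ne
        simp only [hedges_def, Finset.mem_filter, Finset.mk_mem_sym2_iff, Sym2.mk_isDiag_iff]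
        exact ⟨⟨hVfin.mem_toFinset.mpr hu, hVfin.mem_toFinset.mpr hv⟩, hne⟩
    · intro e he
      have heH := hTedge e he
      induction e using Sym2.ind with
      | _ u v =>
        have hadj : H.Adj u v := SimpleGraph.Subgraph.mem_edgeSet.mp heH
        exact (H.adj_sub hadj).2
  calc erdosRenyi n (d/(n:ℝ)) {ω | ∃ H : (graphOf ω).Subgraph,
        1 ≤ Nat.card H.verts ∧
        (Nat.card H.verts : ℝ) ≤ (4*d) ^ (-(1+1/ε)) * n ∧
        (1+ε) * (Nat.card H.verts : ℝ) < (Nat.card H.edgeSet : ℝ)}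
      ≤ erdosRenyi n (d/(n:ℝ)) (⋃ k ∈ Finset.Icc 1 K,
          ⋃ S ∈ Finset.powersetCard k (Finset.univ : Finset (Fin n)),
          ⋃ T ∈ Finset.powersetCard (mf k) (edges S), A T) := measure_mono hsub
    _ ≤ ∑ k ∈ Finset.Icc 1 K, erdosRenyi n (d/(n:ℝ))
          (⋃ S ∈ Finset.powersetCard k (Finset.univ : Finset (Fin n)),
          ⋃ T ∈ Finset.powersetCard (mf k) (edges S), A T) :=
        measure_biUnion_finset_le _ _
    _ ≤ ∑ k ∈ Finset.Icc 1 K, ∑ S ∈ Finset.powersetCard k (Finset.univ : Finset (Fin n)),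
          erdosRenyi n (d/(n:ℝ)) (⋃ T ∈ Finset.powersetCard (mf k) (edges S), A T) :=
        Finset.sum_le_sum fun k _ => measure_biUnion_finset_le _ _
    _ ≤ ∑ k ∈ Finset.Icc 1 K, ∑ S ∈ Finset.powersetCard k (Finset.univ : Finset (Fin n)),
          ∑ T ∈ Finset.powersetCard (mf k) (edges S), erdosRenyi n (d/(n:ℝ)) (A T) :=
        Finset.sum_le_sum fun k _ => Finset.sum_le_sum fun S _ =>
          measure_biUnion_finset_le _ _
    _ = ∑ k ∈ Finset.Icc 1 K, ((n.choose k : ℝ≥0∞) * (((k.choose 2).choose (mf k) : ℕ) : ℝ≥0∞))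
          * pm ^ (mf k) := by
        refine Finset.sum_congr rfl fun k _ => ?_
        have hinner : ∀ S ∈ Finset.powersetCard k (Finset.univ : Finset (Fin n)),
            ∑ T ∈ Finset.powersetCard (mf k) (edges S), erdosRenyi n (d/(n:ℝ)) (A T)
            = (((k.choose 2).choose (mf k) : ℕ) : ℝ≥0∞) * pm ^ (mf k) := by
          intro S hS
          have hScard := Finset.mem_powersetCard_univ.mp hS
          have hsum : ∀ T ∈ Finset.powersetCard (mf k) (edges S),
              erdosRenyi n (d/(n:ℝ)) (A T) = pm ^ (mf k) := by
            intro T hT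
            rw [hA T, (Finset.mem_powersetCard.mp hT).2]
          rw [Finset.sum_congr rfl hsum, Finset.sum_const, Finset.card_powersetCard,
            nsmul_eq_mul]
          congr 2
          rw [hedges_def]
          simp only
          rw [card_sym2_nondiag, hScard]
        rw [Finset.sum_congr rfl hinner, Finset.sum_const, Finset.card_powersetCard,
          Finset.card_univ, Fintype.card_fin, nsmul_eq_mul, mul_assoc]
    _ ≤ ∑ k ∈ Finset.Icc 1 K, ENNReal.ofReal ((n.choose k : ℝ)
          * (((k.choose 2).choose (mf k) : ℕ) : ℝ) * (d/(n:ℝ))^(mf k)) := by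
        refine Finset.sum_le_sum fun k _ => ?_
        have hdn : (0:ℝ) ≤ d/(n:ℝ) := by positivity
        have hpow : pm ^ (mf k) ≤ ENNReal.ofReal ((d/(n:ℝ))^(mf k)) := by
          rw [ENNReal.ofReal_pow hdn]
          exact pow_le_pow_left' (ENNReal.coe_le_coe.mpr (min_le_left _ _)) _
        calc ((n.choose k : ℝ≥0∞) * (((k.choose 2).choose (mf k) : ℕ) : ℝ≥0∞)) * pm ^ (mf k)
            ≤ ((n.choose k : ℝ≥0∞) * (((k.choose 2).choose (mf k) : ℕ) : ℝ≥0∞))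
              * ENNReal.ofReal ((d/(n:ℝ))^(mf k)) := by
              exact mul_le_mul_right hpow _
          _ = ENNReal.ofReal ((n.choose k : ℝ)
              * (((k.choose 2).choose (mf k) : ℕ) : ℝ) * (d/(n:ℝ))^(mf k)) := by
              rw [ENNReal.ofReal_mul (by positivity), ENNReal.ofReal_mul (by positivity)]
              simp [ENNReal.ofReal_natCast]
    _ = ENNReal.ofReal (∑ k ∈ Finset.Icc 1 K, (n.choose k : ℝ)
          * (((k.choose 2).choose (mf k) : ℕ) : ℝ) * (d/(n:ℝ))^(mf k)) :=
        (ENNReal.ofReal_sum_of_nonneg fun k _ => by positivity).symm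

/-- For fixed reals `d > 0` and `ε > 0`, the probability that
`G(n, d/n)` contains a subgraph `G'` with `1 ≤ |G'| ≤ (4d)^{-(1+1/ε)}·n` and
`‖G'‖ > (1+ε)·|G'|` tends to `0` as `n → ∞`. -/

theorem stmt_3 (d ε : ℝ) (hd : 0 < d) (hε : 0 < ε) :
    Tendsto
      (fun n : ℕ =>
        erdosRenyi n (d / n)
          {ω | ∃ H : (graphOf ω).Subgraph,
              1 ≤ Nat.card H.verts ∧
              (Nat.card H.verts : ℝ) ≤ (4 * d) ^ (-(1 + 1 / ε)) * (n : ℝ) ∧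
              (1 + ε) * (Nat.card H.verts : ℝ) < (Nat.card H.edgeSet : ℝ)})
      atTop (nhds 0) := by
  obtain ⟨CC, hCC0, hCC⟩ := real_sum_bound d ε hd hε
  have hub : Tendsto (fun n : ℕ => ENNReal.ofReal (CC * (n:ℝ)^(-ε))) atTop (nhds 0) := by
    have h1 : Tendsto (fun n : ℕ => ((n:ℝ))^(-ε)) atTop (nhds 0) :=
      (tendsto_rpow_neg_atTop hε).comp tendsto_natCast_atTop_atTop
    have h2 : Tendsto (fun n : ℕ => CC * ((n:ℝ))^(-ε)) atTop (nhds 0) := by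
      simpa using h1.const_mul CC
    have h3 := ENNReal.tendsto_ofReal (f := atTop) h2
    simpa using h3
  refine tendsto_of_tendsto_of_tendsto_of_le_of_le' tendsto_const_nhds hub
    (Filter.Eventually.of_forall fun n => zero_le) ?_
  filter_upwards [eventually_ge_atTop 1] with n hn
  calc erdosRenyi n (d / n)
          {ω | ∃ H : (graphOf ω).Subgraph,
              1 ≤ Nat.card H.verts ∧
              (Nat.card H.verts : ℝ) ≤ (4 * d) ^ (-(1 + 1 / ε)) * (n : ℝ) ∧
              (1 + ε) * (Nat.card H.verts : ℝ) < (Nat.card H.edgeSet : ℝ)}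
      ≤ ENNReal.ofReal (∑ k ∈ Finset.Icc 1 (Nat.floor ((4*d) ^ (-(1+1/ε)) * (n:ℝ))),
          (n.choose k : ℝ) * (((k.choose 2).choose (Nat.floor ((1+ε)*(k:ℝ))+1)) : ℝ)
            * (d/(n:ℝ))^(Nat.floor ((1+ε)*(k:ℝ))+1)) := erdos_bound d ε hd hε n
    _ ≤ ENNReal.ofReal (CC * (n:ℝ)^(-ε)) := ENNReal.ofReal_le_ofReal (hCC n hn)
end

section
/- Let G be a graph with a k-queue layout with vertex order < and queue assignment q, and let Q be the associated signed queue function. Let (v₁, v₂, …, v_r) and (w₁, w₂, …, w_r) be vertex-disjoint paths in G such that Q(v_i, v_{i+1}) = Q(w_i, w_{i+1}) for each i ∈ {1, …, r−1}. Then v₁ < w₁ if and only if v_r < w_r. -/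
open SimpleGraph MeasureTheory Filter

lemma stmt_8_step {V : Type*} [LinearOrder V] {G : SimpleGraph V} {k : ℕ}
    {q : Sym2 V → Fin k} (hq : IsQueueLayout G k q)
    {a a' b b' : V} (ha : G.Adj a a') (hb : G.Adj b b')
    (hab : a ≠ b) (hab' : a' ≠ b')
    (hQ : signedQueue q a a' = signedQueue q b b') :
    (a < b ↔ a' < b') := by
  unfold signedQueue at hQ
  rcases lt_or_gt_of_ne ha.ne with h1 | h1 <;> rcases lt_or_gt_of_ne hb.ne with h2 | h2
  · simp only [if_pos h1, if_pos h2] at hQ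
    have hqe : q s(a, a') = q s(b, b') := Fin.ext (by exact_mod_cast (by omega : ((q s(a, a') : ℕ) : ℤ) = ((q s(b, b') : ℕ) : ℤ)))
    constructor
    · intro h
      rcases lt_or_gt_of_ne hab' with h' | h'
      · exact h'
      · exact absurd ⟨h, h'⟩ (hq ha hb h1 h2 hqe)
    · intro h
      rcases lt_or_gt_of_ne hab with h' | h'
      · exact h'
      · exact absurd ⟨h', h⟩ (hq hb ha h2 h1 hqe.symm)
  · simp only [if_pos h1, if_neg (not_lt.mpr h2.le)] at hQ
    omega
  · simp only [if_neg (not_lt.mpr h1.le), if_pos h2] at hQ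
    omega
  · simp only [if_neg (not_lt.mpr h1.le), if_neg (not_lt.mpr h2.le)] at hQ
    have hqe' : q s(a', a) = q s(b', b) := by
      rw [Sym2.eq_swap, (Sym2.eq_swap : s(b', b) = s(b, b'))]
      exact Fin.ext (by exact_mod_cast (by omega : ((q s(a, a') : ℕ) : ℤ) = ((q s(b, b') : ℕ) : ℤ)))
    constructor
    · intro h
      rcases lt_or_gt_of_ne hab' with h' | h'
      · exact h'
      · exact absurd ⟨h', h⟩ (hq hb.symm ha.symm h2 h1 hqe'.symm)
    · intro h
      rcases lt_or_gt_of_ne hab with h' | h'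
      · exact h'
      · exact absurd ⟨h, h'⟩ (hq ha.symm hb.symm h1 h2 hqe')

/-- In a `k`-queue layout of `G`, if `(v₁,…,v_r)` and `(w₁,…,w_r)` are
vertex-disjoint paths with `Q(v_i, v_{i+1}) = Q(w_i, w_{i+1})` for each `i ∈ {1,…,r-1}`,
then `v₁ < w₁ ↔ v_r < w_r` (here indexed from `0`). -/
theorem stmt_8 {V : Type*} [LinearOrder V] [Fintype V] (G : SimpleGraph V) (k : ℕ)
    (q : Sym2 V → Fin k) (hq : IsQueueLayout G k q)
    (r : ℕ) (hr : 1 ≤ r) (v w : ℕ → V)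
    (hv_inj : ∀ i, i < r → ∀ j, j < r → i ≠ j → v i ≠ v j)
    (hw_inj : ∀ i, i < r → ∀ j, j < r → i ≠ j → w i ≠ w j)
    (hv_adj : ∀ i, i + 1 < r → G.Adj (v i) (v (i + 1)))
    (hw_adj : ∀ i, i + 1 < r → G.Adj (w i) (w (i + 1)))
    (hdisj : ∀ i, i < r → ∀ j, j < r → v i ≠ w j)
    (hQ : ∀ i, i + 1 < r →
      signedQueue q (v i) (v (i + 1)) = signedQueue q (w i) (w (i + 1))) :
    (v 0 < w 0 ↔ v (r - 1) < w (r - 1)) := by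
  have key : ∀ i, i < r → (v 0 < w 0 ↔ v i < w i) := by
    intro i hi
    induction i with
    | zero => exact Iff.rfl
    | succ n ih =>
      have hn : n < r := Nat.lt_of_succ_lt hi
      have hstep := stmt_8_step hq (hv_adj n hi) (hw_adj n hi)
        (hdisj n hn n hn) (hdisj (n + 1) hi (n + 1) hi) (hQ n hi)
      exact (ih hn).trans hstep
  exact key (r - 1) (by omega)
end

section
/- Let T be a forest and let T' be the 1-subdivision of T. If π(T') ≤ k then π(T) ≤ k(k+1)(2k+1). -/
open SimpleGraph MeasureTheory Filter

/-! ### Auxiliary machinery for Statement 13 -/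

namespace Stmt13Aux

open SimpleGraph Walk

variable {V : Type*} (T : SimpleGraph V)

noncomputable def root (v : V) : V := (T.connectedComponentMk v).out

lemma reachable_root (v : V) : T.Reachable v (root T v) :=
  (SimpleGraph.ConnectedComponent.exact (Quot.out_eq (T.connectedComponentMk v))).symm

lemma root_eq_of_adj {u v : V} (h : T.Adj u v) : root T u = root T v := by
  unfold root
  rw [SimpleGraph.ConnectedComponent.connectedComponentMk_eq_of_adj h]

open scoped Classical in
noncomputable def cpath (v : V) : T.Path v (root T v) :=
  (reachable_root T v).some.toPath

noncomputable def depth (v : V) : ℕ := (cpath T v).1.length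

open scoped Classical in
noncomputable def par (v : V) : Option V :=
  if _ : root T v = v then none else some ((cpath T v).1.getVert 1)

lemma par_spec {v u : V} :
    par T v = some u ↔ ¬ root T v = v ∧ (cpath T v).1.getVert 1 = u := by
  unfold par
  split_ifs with hr <;> simp [hr]

lemma length_cpath_pos {v : V} (h : ¬ root T v = v) : 0 < (cpath T v).1.length := by
  refine Nat.pos_of_ne_zero fun h0 => h ?_
  exact (Walk.eq_of_length_eq_zero h0).symm

lemma par_adj {v u : V} (h : par T v = some u) : T.Adj v u := by
  obtain ⟨hr, hg⟩ := (par_spec T).mp h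
  have h0 : 0 < (cpath T v).1.length := length_cpath_pos T hr
  have := (cpath T v).1.adj_getVert_succ h0
  rw [hg] at this
  simpa using this

lemma depth_par (hT : T.IsAcyclic) {v u : V} (h : par T v = some u) :
    depth T v = depth T u + 1 := by
  have hadj : T.Adj v u := par_adj T h
  have hroot : root T v = root T u := root_eq_of_adj T hadj
  obtain ⟨hr, hg⟩ := (par_spec T).mp h
  have hnil : ¬ (cpath T v).1.Nil := Walk.not_nil_iff_lt_length.2 (length_cpath_pos T hr)
  obtain ⟨x, hx, q, hq⟩ := Walk.not_nil_iff.mp hnil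
  have hx1 : x = u := by rw [← hg, hq]; simp
  subst hx1
  have hqp : q.IsPath := by
    have := (cpath T v).2
    rw [hq] at this
    exact this.of_cons
  have hcu : cpath T x = ⟨q.copy rfl hroot, by simpa using hqp⟩ :=
    (hT.path_unique _ _).symm
  unfold depth
  rw [hq, hcu]
  simp

lemma par_or (hT : T.IsAcyclic) {u v : V} (h : T.Adj u v) :
    par T u = some v ∨ par T v = some u := by
  classical
  by_cases hu : u ∈ (cpath T v).1.support
  · right
    have hq : (cpath T v).1.IsPath := (cpath T v).2
    have hdrop : ((cpath T v).1.dropUntil u hu).IsPath := hq.dropUntil hu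
    have hroot : root T v = root T u := root_eq_of_adj T h.symm
    have hcu : cpath T u = ⟨((cpath T v).1.dropUntil u hu).copy rfl hroot, by simpa using hdrop⟩ :=
      (hT.path_unique _ _).symm
    have hvnot : v ∉ ((cpath T v).1.dropUntil u hu).support := by
      have hnd : (cpath T v).1.support.Nodup := hq.support_nodup
      have hsup : (cpath T v).1.support
          = ((cpath T v).1.takeUntil u hu).support ++ ((cpath T v).1.dropUntil u hu).support.tail := by
        rw [← Walk.support_append, Walk.take_spec]
      intro hv
      rw [Walk.support_eq_cons] at hv
      rcases List.mem_cons.mp hv with h1 | h1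
      · exact h.ne h1.symm
      · have hvt : v ∈ ((cpath T v).1.takeUntil u hu).support := Walk.start_mem_support _
        rw [hsup] at hnd
        exact (List.disjoint_of_nodup_append hnd) hvt h1
    have hvnot' : v ∉ (cpath T u).1.support := by
      rw [hcu]; simpa using hvnot
    have hpath : (Walk.cons h.symm (cpath T u).1).IsPath := (cpath T u).2.cons hvnot'
    have hcv : cpath T v = ⟨(Walk.cons h.symm (cpath T u).1).copy rfl hroot.symm, by simpa using hpath⟩ :=
      (hT.path_unique _ _).symm
    have hner : ¬ root T v = v := by
      intro he
      apply hvnot'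
      have : root T u = v := (hroot.symm).trans he
      exact this ▸ Walk.end_mem_support (cpath T u).1
    rw [par_spec]
    refine ⟨hner, ?_⟩
    rw [hcv]
    simp [Walk.getVert_cons_succ]
  · left
    have hroot : root T u = root T v := root_eq_of_adj T h
    have hpath : (Walk.cons h (cpath T v).1).IsPath := (cpath T v).2.cons hu
    have hcu : cpath T u = ⟨(Walk.cons h (cpath T v).1).copy rfl hroot.symm, by simpa using hpath⟩ :=
      (hT.path_unique _ _).symm
    have hner : ¬ root T u = u := by
      intro he
      apply hu
      have : root T v = u := (hroot.symm).trans he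
      exact this ▸ Walk.end_mem_support (cpath T v).1
    rw [par_spec]
    refine ⟨hner, ?_⟩
    rw [hcu]
    simp [Walk.getVert_cons_succ]

section Subdiv

variable {W : Type*} {T : SimpleGraph V} {T' : SimpleGraph W} (S : SubdivisionWitness T T')

/-- The middle vertex of the subdivision path of an edge. -/
def midd {a b : V} (h : T.Adj a b) : W := (S.path h).getVert 1

variable (hlen : ∀ ⦃a b : V⦄ (h : T.Adj a b), (S.path h).length = 2)
include hlen

lemma adj_midd_left {a b : V} (h : T.Adj a b) : T'.Adj (S.emb a) (midd S h) := by
  have h0 : 0 < (S.path h).length := by rw [hlen h]; omega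
  have := (S.path h).adj_getVert_succ h0
  simpa [midd] using this

lemma adj_midd_right {a b : V} (h : T.Adj a b) : T'.Adj (midd S h) (S.emb b) := by
  have h1 : 1 < (S.path h).length := by rw [hlen h]; omega
  have hthis := (S.path h).adj_getVert_succ h1
  have h2 : (S.path h).getVert 2 = S.emb b := by
    rw [← hlen h]; exact (S.path h).getVert_length
  rw [h2] at hthis
  exact hthis

lemma midd_mem_support {a b : V} (h : T.Adj a b) : midd S h ∈ (S.path h).support :=
  Walk.mem_support_iff_exists_getVert.mpr ⟨1, rfl, by rw [hlen h]; omega⟩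

lemma emb_ne_midd {a b : V} (h : T.Adj a b) (x : V) : S.emb x ≠ midd S h := by
  intro he
  have hmem : S.emb x ∈ (S.path h).support := by rw [he]; exact midd_mem_support S hlen h
  rcases S.internal_new h x hmem with rfl | rfl
  · exact (adj_midd_left S hlen h).ne he
  · exact (adj_midd_right S hlen h).ne he.symm

lemma midd_symm {a b : V} (h : T.Adj a b) : midd S h.symm = midd S h := by
  unfold midd
  rw [S.path_symm h, Walk.getVert_reverse]
  congr 1
  rw [hlen h]

lemma midd_inj {a b a' b' : V} (h : T.Adj a b) (h' : T.Adj a' b')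
    (hne : s(a, b) ≠ s(a', b')) : midd S h ≠ midd S h' := by
  intro he
  obtain ⟨x, hx⟩ := S.internally_disjoint h h' hne (midd S h) (midd_mem_support S hlen h)
    (by rw [he]; exact midd_mem_support S hlen h')
  exact emb_ne_midd S hlen h x hx

omit hlen

open scoped Classical in
noncomputable def pmid (v : V) : Option W :=
  if h : ∃ (u : V) (_ : T.Adj v u), par T v = some u then
    some (midd S h.choose_spec.choose) else none

lemma pmid_eq {v u : V} (hpar : par T v = some u) :
    pmid S v = some (midd S (par_adj T hpar)) := by
  have hex : ∃ (u' : V) (_ : T.Adj v u'), par T v = some u' := ⟨u, par_adj T hpar, hpar⟩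
  rw [pmid, dif_pos hex]
  have key : ∀ (u' : V) (hadj' : T.Adj v u'), par T v = some u' →
      midd S hadj' = midd S (par_adj T hpar) := by
    intro u' hadj' hpar'
    have he : u' = u := by rw [hpar] at hpar'; exact (Option.some.inj hpar').symm
    subst he
    rfl
  rw [key _ hex.choose_spec.choose hex.choose_spec.choose_spec]

lemma pmid_eq_some {v : V} {w : W} (h : pmid S v = some w) :
    ∃ (u : V) (hadj : T.Adj v u), par T v = some u ∧ w = midd S hadj := by
  rw [pmid] at h
  split_ifs at h with hex
  · exact ⟨hex.choose, hex.choose_spec.choose, hex.choose_spec.choose_spec,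
      (Option.some.inj h).symm⟩

end Subdiv

lemma nonrep_of_injective {α : Type*} (G : SimpleGraph V) (f : V → α)
    (hf : Function.Injective f) : NonRepColoring G f := by
  intro s hs v hinj _ hrep
  exact hinj 0 (by omega) s (by omega) (by omega) (by simpa using hf (hrep 0 hs))

lemma nonrep_comp {α β : Type*} (G : SimpleGraph V) {f : V → α} (ι : α → β)
    (hι : Function.Injective ι) (hf : NonRepColoring G f) :
    NonRepColoring G (fun v => ι (f v)) := by
  intro s hs v hinj hadj hrep
  exact hf s hs v hinj hadj (fun i hi => hι (hrep i hi))

lemma exists_nonrep [Fintype V] (G : SimpleGraph V) {k : ℕ} (h : piNum G ≤ k) :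
    ∃ f : V → Fin k, NonRepColoring G f := by
  have hne : {n : ℕ | ∃ f : V → Fin n, NonRepColoring G f}.Nonempty :=
    ⟨Fintype.card V, fun w => Fintype.equivFin V w,
      nonrep_of_injective _ _ (fun a b hab => (Fintype.equivFin V).injective hab)⟩
  obtain ⟨f0, hf0⟩ := Nat.sInf_mem hne
  exact ⟨fun w => Fin.castLE h (f0 w), nonrep_comp _ _ (Fin.castLE_injective h) hf0⟩

end Stmt13Aux

/-- Let `T` be a forest and `T'` its `1`-subdivision. If `π(T') ≤ k` then
`π(T) ≤ k(k+1)(2k+1)`. -/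
theorem stmt_13 {V W : Type*} [Fintype V] [Fintype W]
    (T : SimpleGraph V) (hT : T.IsAcyclic) (T' : SimpleGraph W)
    (hsub : IsExactSubdivision 1 T T') (k : ℕ) (hk : piNum T' ≤ k) :
    piNum T ≤ k * (k + 1) * (2 * k + 1) := by
  classical
  obtain ⟨S, hlen'⟩ := hsub
  have hlen : ∀ ⦃a b : V⦄ (h : T.Adj a b), (S.path h).length = 2 := by
    intro a b h; rw [hlen' h]
  rcases Nat.eq_zero_or_pos k with rfl | hkpos
  · obtain ⟨f, -⟩ := Stmt13Aux.exists_nonrep T' hk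
    have hWe : IsEmpty W := ⟨fun w => (f w).elim0⟩
    have hVe : IsEmpty V := ⟨fun x => hWe.false (S.emb x)⟩
    have h0 : piNum T ≤ 0 := Nat.sInf_le ⟨fun x => (hVe.false x).elim,
      fun s hs v _ _ _ => (hVe.false (v 0)).elim⟩
    omega
  obtain ⟨f, hf⟩ := Stmt13Aux.exists_nonrep T' hk
  open Stmt13Aux in
  have hmain : NonRepColoring T (fun x : V =>
      (f (S.emb x), Option.map f (pmid S x), (depth T x : ZMod 3))) := by
    intro s hs v hinj hadj hrep
    have hvne : ∀ {a b : ℕ}, a < 2*s → b < 2*s → v a = v b → a = b := by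
      intro a b ha hb he
      by_contra hne
      exact hinj a ha b hb hne he
    have h1 : ∀ i, i < s → f (S.emb (v i)) = f (S.emb (v (i + s))) := by
      intro i hi
      exact congrArg (fun p => p.1) (hrep i hi)
    have h2 : ∀ i, i < s → Option.map f (pmid S (v i)) = Option.map f (pmid S (v (i + s))) := by
      intro i hi
      exact congrArg (fun p => p.2.1) (hrep i hi)
    have h3 : ∀ i, i < s → (depth T (v i) : ZMod 3) = (depth T (v (i + s)) : ZMod 3) := by
      intro i hi
      exact congrArg (fun p => p.2.2) (hrep i hi)
    have hnotboth : ∀ {a b : V}, par T a = some b → par T b = some a → False := by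
      intro a b hab hba
      have d1 := depth_par T hT hab
      have d2 := depth_par T hT hba
      omega
    have hdep : ∀ {a b : V}, par T a = some b →
        (depth T a : ZMod 3) = (depth T b : ZMod 3) + 1 := by
      intro a b hab
      rw [depth_par T hT hab]
      push_cast
      ring
    have halign : ∀ i, i + 1 < s →
        ¬(par T (v i) = some (v (i+1)) ∧ par T (v (i+s+1)) = some (v (i+s))) := by
      rintro i hi ⟨hA, hB⟩
      have e1 := h3 i (by omega)
      have e2 : (depth T (v (i+1)) : ZMod 3) = (depth T (v (i+s+1)) : ZMod 3) := by
        have := h3 (i+1) (by omega)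
        rwa [show i+1+s = i+s+1 by omega] at this
      have d1 := hdep hA
      have d2 := hdep hB
      have hcontra : (depth T (v (i+s)) : ZMod 3) = (depth T (v (i+s)) : ZMod 3) + 2 := by
        calc (depth T (v (i+s)) : ZMod 3) = (depth T (v i) : ZMod 3) := e1.symm
          _ = (depth T (v (i+1)) : ZMod 3) + 1 := d1
          _ = (depth T (v (i+s+1)) : ZMod 3) + 1 := by rw [e2]
          _ = ((depth T (v (i+s)) : ZMod 3) + 1) + 1 := by rw [d2]
          _ = (depth T (v (i+s)) : ZMod 3) + 2 := by ring
      exact absurd (left_eq_add.mp hcontra) (by decide)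
    have hmono : ∀ i, i + 2 < 2*s → par T (v (i+1)) = some (v i) →
        par T (v (i+2)) = some (v (i+1)) := by
      intro i hi hDi
      rcases par_or T hT (hadj (i+1) (by omega)) with hUi | hDi'
      · exfalso
        have he : v i = v (i+1+1) := Option.some.inj (hDi.symm.trans hUi)
        have := hvne (a := i) (b := i+1+1) (by omega) (by omega) he
        omega
      · rwa [show i+1+1 = i+2 by omega] at hDi'
    have hdich : (∀ i, i + 1 < 2*s → par T (v i) = some (v (i+1))) ∨
        (∀ i, i + 1 < 2*s → par T (v (i+1)) = some (v i)) := by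
      by_cases hall : ∀ i, i + 1 < 2*s → par T (v i) = some (v (i+1))
      · exact Or.inl hall
      · push_neg at hall
        obtain ⟨j0, hj0, hj0U⟩ := hall
        have hex : ∃ j, j + 1 < 2*s ∧ ¬ par T (v j) = some (v (j+1)) := ⟨j0, hj0, hj0U⟩
        set j := Nat.find hex with hjdef
        obtain ⟨hjlt, hjnU⟩ := Nat.find_spec hex
        have hjD : par T (v (j+1)) = some (v j) :=
          (par_or T hT (hadj j hjlt)).resolve_left hjnU
        have hminU : ∀ i, i < j → i + 1 < 2*s → par T (v i) = some (v (i+1)) := by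
          intro i hij hilt
          by_contra hc
          exact Nat.find_min hex hij ⟨hilt, hc⟩
        have hgeD : ∀ t, j + t + 1 < 2*s → par T (v (j + t + 1)) = some (v (j + t)) := by
          intro t
          induction t with
          | zero => intro _; simpa using hjD
          | succ n ih =>
            intro h
            have hn : j + n + 1 < 2*s := by omega
            have hmm := hmono (j+n) (by omega) (ih hn)
            rwa [show j+n+2 = j+(n+1)+1 by omega, show j+n+1 = j+(n+1) by omega] at hmm
        have hj0' : j = 0 := by
          by_contra hjne
          rcases lt_or_ge j s with hjs | hjs
          · have hUj := hminU (j-1) (by omega) (by omega)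
            have hDd : par T (v ((j-1)+s+1)) = some (v ((j-1)+s)) := by
              rw [show (j-1)+s+1 = j+(s-1)+1 by omega, show (j-1)+s = j+(s-1) by omega]
              exact hgeD (s-1) (by omega)
            exact (halign (j-1) (by omega)) ⟨hUj, hDd⟩
          · have hUj := hminU (j-s) (by omega) (by omega)
            have hDd : par T (v ((j-s)+s+1)) = some (v ((j-s)+s)) := by
              rw [show (j-s)+s+1 = j+1 by omega, show (j-s)+s = j by omega]
              exact hjD
            exact (halign (j-s) (by omega)) ⟨hUj, hDd⟩
        right
        intro i hi
        have hh := hgeD i (by omega)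
        rw [hj0'] at hh
        simpa using hh
    set M : ℕ → W := fun i => if h : i + 1 < 2*s then midd S (hadj i h) else S.emb (v 0)
      with hMdef
    have hM : ∀ i (h : i + 1 < 2*s), M i = midd S (hadj i h) := by
      intro i h
      simp only [hMdef]
      exact dif_pos h
    have hadjEM : ∀ i (h : i + 1 < 2*s), T'.Adj (S.emb (v i)) (M i) := by
      intro i h
      rw [hM i h]
      exact adj_midd_left S hlen (hadj i h)
    have hadjME : ∀ i (h : i + 1 < 2*s), T'.Adj (M i) (S.emb (v (i+1))) := by
      intro i h
      rw [hM i h]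
      exact adj_midd_right S hlen (hadj i h)
    have hMnE : ∀ (x : V) i, i + 1 < 2*s → S.emb x ≠ M i := by
      intro x i h
      rw [hM i h]
      exact emb_ne_midd S hlen (hadj i h) x
    have hMne : ∀ i i', i + 1 < 2*s → i' + 1 < 2*s → i ≠ i' → M i ≠ M i' := by
      intro i i' h h' hne
      rw [hM i h, hM i' h']
      refine midd_inj S hlen _ _ ?_
      intro hse
      rcases Sym2.eq_iff.mp hse with ⟨ha, hb⟩ | ⟨ha, hb⟩
      · exact hne (hvne (by omega) (by omega) ha)
      · have e1 := hvne (a := i) (b := i'+1) (by omega) (by omega) ha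
        have e2 := hvne (a := i+1) (b := i') (by omega) (by omega) hb
        omega
    rcases hdich with hU | hD
    · -- all edges ascend
      have hpmidU : ∀ i (h : i + 1 < 2*s), pmid S (v i) = some (M i) := by
        intro i h
        rw [pmid_eq S (hU i h), hM i h]
      have h2e := h2 (s-1) (by omega)
      rw [hpmidU (s-1) (by omega), Option.map_some] at h2e
      obtain ⟨w1, hw1some, hw1f⟩ := Option.map_eq_some_iff.mp h2e.symm
      obtain ⟨u1, hadj1, hpar1, hw1eq⟩ := pmid_eq_some S hw1some
      set useq : ℕ → W := fun j =>
        if j = 2*(2*s) - 1 then w1 else if j % 2 = 0 then S.emb (v (j / 2)) else M (j / 2)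
        with husdef
      have hulast : useq (2*(2*s) - 1) = w1 := by simp [husdef]
      have huev : ∀ i, i < 2*s → useq (2*i) = S.emb (v i) := by
        intro i hi
        have hd : (2*i) / 2 = i := by omega
        simp only [husdef]
        rw [if_neg (by omega), if_pos (by omega), hd]
      have huod : ∀ i, i + 1 < 2*s → useq (2*i+1) = M i := by
        intro i hi
        have hd : (2*i+1) / 2 = i := by omega
        simp only [husdef]
        rw [if_neg (by omega), if_neg (by omega), hd]
      have hw1E : ∀ x : V, w1 ≠ S.emb x := by
        intro x h
        exact emb_ne_midd S hlen hadj1 x (by rw [← h, hw1eq])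
      have hw1M : ∀ i, i + 1 < 2*s → w1 ≠ M i := by
        intro i h heq
        rw [hw1eq, hM i h] at heq
        by_cases hse : s(v (s-1+s), u1) = s(v i, v (i+1))
        · rcases Sym2.eq_iff.mp hse with ⟨ha, hb⟩ | ⟨ha, hb⟩
          · have := hvne (a := s-1+s) (b := i) (by omega) (by omega) ha
            omega
          · have hieq : s-1+s = i+1 := hvne (by omega) (by omega) ha
            rw [hb] at hpar1
            rw [hieq] at hpar1
            exact hnotboth hpar1 (hU i h)
        · exact midd_inj S hlen hadj1 (hadj i h) hse heq
      have hchar : ∀ j, j < 2*(2*s) →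
          (j = 2*(2*s) - 1 ∧ useq j = w1) ∨
          (∃ i, i < 2*s ∧ j = 2*i ∧ useq j = S.emb (v i)) ∨
          (∃ i, i + 1 < 2*s ∧ j = 2*i+1 ∧ useq j = M i) := by
        intro j hj
        by_cases hj4 : j = 2*(2*s) - 1
        · exact Or.inl ⟨hj4, by rw [hj4]; exact hulast⟩
        · rcases Nat.even_or_odd j with ⟨m, hm⟩ | ⟨m, hm⟩
          · refine Or.inr (Or.inl ⟨m, by omega, by omega, ?_⟩)
            rw [show j = 2*m by omega]
            exact huev m (by omega)
          · refine Or.inr (Or.inr ⟨m, by omega, by omega, ?_⟩)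
            rw [show j = 2*m+1 by omega]
            exact huod m (by omega)
      refine hf (2*s) (by omega) useq ?_ ?_ ?_
      · intro a ha b hb hab
        rcases hchar a ha with ⟨rfl, hua⟩ | ⟨i, hi, rfl, hua⟩ | ⟨i, hi, rfl, hua⟩
        · rcases hchar b hb with ⟨rfl, hub⟩ | ⟨i', hi', rfl, hub⟩ | ⟨i', hi', rfl, hub⟩
          · exact absurd rfl hab
          · rw [hua, hub]; exact hw1E (v i')
          · rw [hua, hub]; exact hw1M i' hi'
        · rcases hchar b hb with ⟨rfl, hub⟩ | ⟨i', hi', rfl, hub⟩ | ⟨i', hi', rfl, hub⟩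
          · rw [hua, hub]; intro h; exact hw1E (v i) h.symm
          · rw [hua, hub]; intro h
            have := hvne (a := i) (b := i') (by omega) (by omega) (S.emb.injective h)
            omega
          · rw [hua, hub]; exact hMnE (v i) i' hi'
        · rcases hchar b hb with ⟨rfl, hub⟩ | ⟨i', hi', rfl, hub⟩ | ⟨i', hi', rfl, hub⟩
          · rw [hua, hub]; intro h; exact hw1M i hi h.symm
          · rw [hua, hub]; intro h; exact hMnE (v i') i hi h.symm
          · rw [hua, hub]; exact hMne i i' hi hi' (by omega)
      · intro j hj
        rcases hchar j (by omega) with ⟨rfl, hu⟩ | ⟨i, hi, rfl, hu⟩ | ⟨i, hi, rfl, hu⟩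
        · omega
        · by_cases hlast : 2*i+1 = 2*(2*s) - 1
          · rw [hu, hlast, hulast, hw1eq]
            have hieq : i = s-1+s := by omega
            subst hieq
            exact adj_midd_left S hlen hadj1
          · rw [hu, huod i (by omega)]
            exact hadjEM i (by omega)
        · rw [hu, show 2*i+1+1 = 2*(i+1) by omega, huev (i+1) (by omega)]
          exact hadjME i hi
      · intro j hj
        rcases hchar j (by omega) with ⟨rfl, hu⟩ | ⟨i, hi, rfl, hu⟩ | ⟨i, hi, rfl, hu⟩
        · omega
        · rw [hu, show 2*i+2*s = 2*(i+s) by omega, huev (i+s) (by omega)]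
          exact h1 i (by omega)
        · by_cases hilast : i = s-1
          · subst hilast
            rw [hu, show 2*(s-1)+1+2*s = 2*(2*s)-1 by omega, hulast]
            exact hw1f.symm
          · rw [hu, show 2*i+1+2*s = 2*(i+s)+1 by omega, huod (i+s) (by omega)]
            have e := h2 i (by omega)
            rw [hpmidU i (by omega), hpmidU (i+s) (by omega)] at e
            simpa using e
    · -- all edges descend
      have hpmidD : ∀ i (h : i + 1 < 2*s), pmid S (v (i+1)) = some (M i) := by
        intro i h
        rw [pmid_eq S (hD i h), hM i h]
        congr 1
        exact midd_symm S hlen (hadj i h)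
      have hvs : pmid S (v (0 + s)) = some (M (s-1)) := by
        have := hpmidD (s-1) (by omega)
        rwa [show s-1+1 = 0+s by omega] at this
      have h20 := h2 0 hs
      rw [hvs, Option.map_some] at h20
      obtain ⟨w0, hw0some, hw0f⟩ := Option.map_eq_some_iff.mp h20
      obtain ⟨u0, hadj0, hpar0, hw0eq⟩ := pmid_eq_some S hw0some
      set useq : ℕ → W := fun j =>
        if j = 0 then w0 else if j % 2 = 1 then S.emb (v (j / 2)) else M (j / 2 - 1)
        with husdef
      have hu0 : useq 0 = w0 := by simp [husdef]
      have huodd : ∀ i, useq (2*i+1) = S.emb (v i) := by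
        intro i
        have hd : (2*i+1) / 2 = i := by omega
        simp only [husdef]
        rw [if_neg (by omega), if_pos (by omega), hd]
      have hueven : ∀ i, useq (2*i+2) = M i := by
        intro i
        have hd : (2*i+2) / 2 - 1 = i := by omega
        simp only [husdef]
        rw [if_neg (by omega), if_neg (by omega), hd]
      have hw0E : ∀ x : V, w0 ≠ S.emb x := by
        intro x h
        exact emb_ne_midd S hlen hadj0 x (by rw [← h, hw0eq])
      have hw0M : ∀ i, i + 1 < 2*s → w0 ≠ M i := by
        intro i h heq
        rw [hw0eq, hM i h] at heq
        by_cases hse : s(v 0, u0) = s(v i, v (i+1))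
        · rcases Sym2.eq_iff.mp hse with ⟨ha, hb⟩ | ⟨ha, hb⟩
          · have hi0 : 0 = i := hvne (by omega) (by omega) ha
            subst hi0
            rw [hb] at hpar0
            exact hnotboth hpar0 (hD 0 h)
          · have := hvne (a := 0) (b := i+1) (by omega) (by omega) ha
            omega
        · exact midd_inj S hlen hadj0 (hadj i h) hse heq
      have hchar : ∀ j, j < 2*(2*s) →
          (j = 0 ∧ useq j = w0) ∨
          (∃ i, i < 2*s ∧ j = 2*i+1 ∧ useq j = S.emb (v i)) ∨
          (∃ i, i + 1 < 2*s ∧ j = 2*i+2 ∧ useq j = M i) := by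
        intro j hj
        rcases Nat.eq_zero_or_pos j with rfl | hjpos
        · exact Or.inl ⟨rfl, hu0⟩
        · rcases Nat.even_or_odd j with ⟨m, hm⟩ | ⟨m, hm⟩
          · refine Or.inr (Or.inr ⟨m - 1, by omega, by omega, ?_⟩)
            rw [show j = 2*(m-1)+2 by omega, hueven]
          · refine Or.inr (Or.inl ⟨m, by omega, by omega, ?_⟩)
            rw [show j = 2*m+1 by omega, huodd]
      refine hf (2*s) (by omega) useq ?_ ?_ ?_
      · intro a ha b hb hab
        rcases hchar a ha with ⟨rfl, hua⟩ | ⟨i, hi, rfl, hua⟩ | ⟨i, hi, rfl, hua⟩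
        · rcases hchar b hb with ⟨rfl, hub⟩ | ⟨i', hi', rfl, hub⟩ | ⟨i', hi', rfl, hub⟩
          · exact absurd rfl hab
          · rw [hua, hub]; exact hw0E (v i')
          · rw [hua, hub]; exact hw0M i' hi'
        · rcases hchar b hb with ⟨rfl, hub⟩ | ⟨i', hi', rfl, hub⟩ | ⟨i', hi', rfl, hub⟩
          · rw [hua, hub]; intro h; exact hw0E (v i) h.symm
          · rw [hua, hub]; intro h
            have := hvne (a := i) (b := i') (by omega) (by omega) (S.emb.injective h)
            omega
          · rw [hua, hub]; exact hMnE (v i) i' hi'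
        · rcases hchar b hb with ⟨rfl, hub⟩ | ⟨i', hi', rfl, hub⟩ | ⟨i', hi', rfl, hub⟩
          · rw [hua, hub]; intro h; exact hw0M i hi h.symm
          · rw [hua, hub]; intro h; exact hMnE (v i') i hi h.symm
          · rw [hua, hub]; exact hMne i i' hi hi' (by omega)
      · intro j hj
        rcases hchar j (by omega) with ⟨rfl, hu⟩ | ⟨i, hi, rfl, hu⟩ | ⟨i, hi, rfl, hu⟩
        · rw [hu, show (0:ℕ)+1 = 2*0+1 by omega, huodd 0, hw0eq]
          exact (adj_midd_left S hlen hadj0).symm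
        · rw [hu, show 2*i+1+1 = 2*i+2 by omega, hueven i]
          exact hadjEM i (by omega)
        · rw [hu, show 2*i+2+1 = 2*(i+1)+1 by omega, huodd (i+1)]
          exact hadjME i hi
      · intro j hj
        rcases hchar j (by omega) with ⟨rfl, hu⟩ | ⟨i, hi, rfl, hu⟩ | ⟨i, hi, rfl, hu⟩
        · rw [hu, show 0 + 2*s = 2*(s-1)+2 by omega, hueven (s-1)]
          exact hw0f
        · rw [hu, show 2*i+1+2*s = 2*(i+s)+1 by omega, huodd (i+s)]
          exact h1 i (by omega)
        · rw [hu, show 2*i+2+2*s = 2*(i+s)+2 by omega, hueven (i+s)]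
          have e := h2 (i+1) (by omega)
          rw [hpmidD i (by omega)] at e
          have e2 : pmid S (v (i+1+s)) = some (M (i+s)) := by
            have := hpmidD (i+s) (by omega)
            rwa [show i+s+1 = i+1+s by omega] at this
          rw [e2] at e
          simpa using e
  have hcard : Fintype.card (Fin k × Option (Fin k) × ZMod 3) ≤ k * (k + 1) * (2 * k + 1) := by
    have h3 : (3 : ℕ) ≤ 2 * k + 1 := by omega
    calc Fintype.card (Fin k × Option (Fin k) × ZMod 3) = k * ((k+1) * 3) := by
          simp [ZMod.card]
      _ = k * (k+1) * 3 := by ring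
      _ ≤ k * (k+1) * (2*k+1) := Nat.mul_le_mul_left _ h3
  refine Nat.sInf_le ⟨fun x => Fin.castLE hcard ((Fintype.equivFin (Fin k × Option (Fin k) × ZMod 3))
    ((f (S.emb x), Option.map f (Stmt13Aux.pmid S x), (Stmt13Aux.depth T x : ZMod 3)))), ?_⟩
  exact Stmt13Aux.nonrep_comp T
    (fun y => Fin.castLE hcard ((Fintype.equivFin (Fin k × Option (Fin k) × ZMod 3)) y))
    (fun a b hab => (Fintype.equivFin _).injective (Fin.castLE_injective hcard hab)) hmain
end

section
/- Let G be a graph and let G' be the 1-subdivision of G. If π(G') ≤ k and χ_a(G) ≤ ℓ, then π(G) ≤ ℓ·(k(k+1)(2k+1))^{ℓ−1}. -/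
open SimpleGraph MeasureTheory Filter

section Stmt14AuxSec
open SimpleGraph Walk
namespace Stmt14Aux


variable {V : Type*} {F : SimpleGraph V}

/-- A canonical root for the component of `v`. -/
noncomputable def root (F : SimpleGraph V) (v : V) : V := (F.connectedComponentMk v).out

lemma reachable_root (F : SimpleGraph V) (v : V) : F.Reachable v (root F v) :=
  (ConnectedComponent.eq.mp (Quot.out_eq (F.connectedComponentMk v))).symm

lemma root_eq_of_adj {u w : V} (h : F.Adj u w) : root F u = root F w :=
  congrArg Quot.out (ConnectedComponent.connectedComponentMk_eq_of_adj h)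

/-- A canonical path from `v` to the root of its component. -/
noncomputable def pthP (F : SimpleGraph V) (v : V) : F.Path v (root F v) :=
  letI := Classical.decEq V
  (Classical.choice (reachable_root F v)).toPath

noncomputable def pth (F : SimpleGraph V) (v : V) : F.Walk v (root F v) := (pthP F v).1

lemma pth_isPath (F : SimpleGraph V) (v : V) : (pth F v).IsPath := (pthP F v).2

/-- depth of a vertex in its rooted tree -/
noncomputable def dep (F : SimpleGraph V) (v : V) : ℕ := (pth F v).length

/-- parent of a vertex in its rooted tree (junk if `v` is a root) -/
noncomputable def par (F : SimpleGraph V) (v : V) : V := (pth F v).getVert 1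

lemma adj_par_of_dep_pos {u : V} (h : 0 < dep F u) : F.Adj u (par F u) := by
  have := (pth F u).adj_getVert_succ (i := 0) (by unfold dep at h; omega)
  rwa [Walk.getVert_zero] at this

lemma pth_eq (hF : F.IsAcyclic) {v : V} (q : F.Walk v (root F v)) (hq : q.IsPath) :
    q = pth F v :=
  congrArg Subtype.val (hF.path_unique ⟨q, hq⟩ (pthP F v))

lemma not_adj_par_of_dep_eq_zero {u : V} (h : dep F u = 0) : ¬ F.Adj u (par F u) := by
  unfold dep at h
  have h1 : par F u = root F u :=
    Walk.getVert_of_length_le _ (by omega : (pth F u).length ≤ 1)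
  have h2 : u = root F u := Walk.eq_of_length_eq_zero h
  rw [h1, ← h2]
  exact F.loopless.irrefl u

lemma ne_root_of_adj_par {u : V} (h : F.Adj u (par F u)) : u ≠ root F u := by
  intro he
  have hlen : 0 < dep F u := by
    by_contra h0
    exact not_adj_par_of_dep_eq_zero (by omega) h
  -- pth F u is a path from u to u of positive length: contradiction
  have hnil : ((pth F u).copy rfl he.symm) = Walk.nil :=
    (Walk.isPath_iff_eq_nil).mp ((Walk.isPath_copy _ _ _).mpr (pth_isPath F u))
  have : (pth F u).length = 0 := by
    have := congrArg Walk.length hnil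
    simpa using this
  unfold dep at hlen
  omega

/-- key step: a non-root vertex's canonical path decomposes through its parent -/
lemma par_spec (hF : F.IsAcyclic) {u : V} (h : F.Adj u (par F u)) :
    dep F u = dep F (par F u) + 1 := by
  have hur : u ≠ root F u := ne_root_of_adj_par h
  obtain ⟨w, h', q, hq⟩ := Walk.exists_eq_cons_of_ne hur (pth F u)
  have hw : par F u = w := by
    show (pth F u).getVert 1 = w
    rw [hq, Walk.getVert_cons_succ, Walk.getVert_zero]
  have hqpath : q.IsPath := by
    have := pth_isPath F u
    rw [hq, Walk.cons_isPath_iff] at this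
    exact this.1
  have hroot : root F u = root F w := root_eq_of_adj h'
  have hq' : (q.copy rfl hroot) = pth F w := pth_eq hF _ (by simpa using hqpath)
  have : dep F w = q.length := by
    rw [dep, ← hq']; simp
  rw [hw, this, dep, hq]
  simp

/-- every edge of an acyclic graph is a parent-child edge -/
lemma adj_dichotomy (hF : F.IsAcyclic) {u w : V} (h : F.Adj u w) :
    par F u = w ∨ par F w = u := by
  classical
  have hru : root F w = root F u := (root_eq_of_adj h).symm
  set Q : F.Walk w (root F u) := (pth F w).copy rfl hru with hQ
  have hQp : Q.IsPath := by rw [hQ]; simpa using pth_isPath F w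
  by_cases hu : u ∈ Q.support
  · right
    have hT : (Q.takeUntil u hu).IsPath := hQp.takeUntil hu
    have hE : (Walk.cons h.symm Walk.nil : F.Walk w u).IsPath := by
      simp [Walk.cons_isPath_iff, h.ne']
    have hTE : Q.takeUntil u hu = Walk.cons h.symm Walk.nil := by
      have hpu := hF.path_unique ⟨Q.takeUntil u hu, hT⟩ ⟨Walk.cons h.symm Walk.nil, hE⟩
      exact congrArg Subtype.val hpu
    have hspec := Q.take_spec hu
    rw [hTE, Walk.cons_append, Walk.nil_append] at hspec
    -- hspec : cons h.symm (Q.dropUntil u hu) = Q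
    have : par F w = Q.getVert 1 := by
      show (pth F w).getVert 1 = Q.getVert 1
      rw [hQ]; simp
    rw [this, ← hspec, Walk.getVert_cons_succ, Walk.getVert_zero]
  · left
    have hR : (Walk.cons h Q).IsPath := hQp.cons hu
    have hRe : Walk.cons h Q = pth F u := pth_eq hF _ hR
    show (pth F u).getVert 1 = w
    rw [← hRe, Walk.getVert_cons_succ, Walk.getVert_zero]



variable {V W : Type*} {G : SimpleGraph V} {G' : SimpleGraph W}

/-! ### midpoints of subdivided edges -/

noncomputable def mid (S : SubdivisionWitness G G') {a b : V} (h : G.Adj a b) : W :=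
  (S.path h).getVert 1

variable {S : SubdivisionWitness G G'}

lemma mid_adj_left (hS : ∀ ⦃a b : V⦄ (h : G.Adj a b), (S.path h).length = 2)
    {a b : V} (h : G.Adj a b) : G'.Adj (S.emb a) (mid S h) := by
  have := (S.path h).adj_getVert_succ (i := 0) (by rw [hS h]; omega)
  rwa [Walk.getVert_zero] at this

lemma mid_adj_right (hS : ∀ ⦃a b : V⦄ (h : G.Adj a b), (S.path h).length = 2)
    {a b : V} (h : G.Adj a b) : G'.Adj (mid S h) (S.emb b) := by
  have h1 := (S.path h).adj_getVert_succ (i := 1) (by rw [hS h]; omega)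
  have h2 := (S.path h).getVert_length
  rw [hS h] at h2
  rwa [h2] at h1

lemma mid_symm (hS : ∀ ⦃a b : V⦄ (h : G.Adj a b), (S.path h).length = 2)
    {a b : V} (h : G.Adj a b) : mid S h.symm = mid S h := by
  unfold mid
  rw [S.path_symm h, Walk.getVert_reverse, hS h]

lemma mid_mem_support {a b : V} (h : G.Adj a b) : mid S h ∈ (S.path h).support :=
  Walk.mem_support_iff_exists_getVert.mpr ⟨1, rfl, by
    rcases Nat.eq_zero_or_pos (S.path h).length with h0 | h0
    · exfalso
      exact h.ne (S.emb.injective (Walk.eq_of_length_eq_zero h0))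
    · omega⟩

lemma mid_ne_emb (hS : ∀ ⦃a b : V⦄ (h : G.Adj a b), (S.path h).length = 2)
    {a b : V} (h : G.Adj a b) (x : V) : S.emb x ≠ mid S h := by
  intro he
  rcases S.internal_new h x (he ▸ mid_mem_support h) with rfl | rfl
  · have := mid_adj_left hS h
    rw [← he] at this
    exact G'.loopless.irrefl _ this
  · have := mid_adj_right hS h
    rw [← he] at this
    exact G'.loopless.irrefl _ this

lemma mid_ne_mid (hS : ∀ ⦃a b : V⦄ (h : G.Adj a b), (S.path h).length = 2)
    {a b a' b' : V} (h : G.Adj a b) (h' : G.Adj a' b') (hne : s(a, b) ≠ s(a', b')) :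
    mid S h ≠ mid S h' := by
  intro he
  obtain ⟨x, hx⟩ := S.internally_disjoint h h' hne _ (mid_mem_support h)
    (he ▸ mid_mem_support h')
  exact mid_ne_emb hS h x hx



variable {V W : Type*} {G : SimpleGraph V} {G' : SimpleGraph W}

/-! ### the bicoloured forests -/

/-- the subgraph of `G` induced by the two colour classes `p`, `q`. -/
def Fp (G : SimpleGraph V) {l : ℕ} (c : V → Fin l) (p q : Fin l) : SimpleGraph V where
  Adj u w := G.Adj u w ∧ ((c u = p ∧ c w = q) ∨ (c u = q ∧ c w = p))
  symm := by
    constructor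
    rintro u w ⟨h1, h2⟩
    exact ⟨h1.symm, h2.elim (fun t => Or.inr ⟨t.2, t.1⟩) (fun t => Or.inl ⟨t.2, t.1⟩)⟩
  loopless := ⟨fun u h => G.loopless.irrefl u h.1⟩

lemma Fp_comm {l : ℕ} (c : V → Fin l) (p q : Fin l) : Fp G c p q = Fp G c q p := by
  ext u w
  constructor <;> (rintro ⟨h1, h2⟩; exact ⟨h1, h2.symm⟩)

lemma Fp_le {l : ℕ} (c : V → Fin l) (p q : Fin l) : Fp G c p q ≤ G := fun _ _ h => h.1

lemma Fp_col {l : ℕ} {c : V → Fin l} {p q : Fin l} {u w : V}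
    (h : (Fp G c p q).Adj u w) : (c u = p ∧ c w = q) ∨ (c u = q ∧ c w = p) := h.2

lemma Fp_support_col {l : ℕ} {c : V → Fin l} {p q : Fin l} {u u' : V}
    (w : (Fp G c p q).Walk u u') (hw : 0 < w.length) (hc : u = u') :
    ∀ x ∈ w.support, c x = p ∨ c x = q := by
  intro x hx
  rw [Walk.mem_support_iff_exists_getVert] at hx
  obtain ⟨n, hn, hnle⟩ := hx
  rcases Nat.lt_or_ge n w.length with hlt | hge
  · have := w.adj_getVert_succ hlt
    rcases Fp_col this with ⟨h1, _⟩ | ⟨h1, _⟩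
    · exact Or.inl (hn ▸ h1)
    · exact Or.inr (hn ▸ h1)
  · -- n = length, so x = u' = u = getVert 0
    have hxl : x = u' := by
      have : n = w.length := le_antisymm hnle hge
      rw [← hn, this, Walk.getVert_length]
    have := w.adj_getVert_succ (i := 0) hw
    rw [Walk.getVert_zero] at this
    rcases Fp_col this with ⟨h1, _⟩ | ⟨h1, _⟩
    · exact Or.inl (by rw [hxl, ← hc]; exact h1)
    · exact Or.inr (by rw [hxl, ← hc]; exact h1)

lemma Fp_acyclic {l : ℕ} {c : V → Fin l} (hc : AcyclicColoring G c) {p q : Fin l} :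
    (Fp G c p q).IsAcyclic := by
  intro v cyc hcyc
  have hcyc' := hcyc.mapLe (Fp_le c p q)
  obtain ⟨x, hx, y, hy, z, hz, hxy, hxz, hyz⟩ := hc.2 v (cyc.mapLe (Fp_le c p q)) hcyc'
  have hsup : (cyc.mapLe (Fp_le c p q)).support = cyc.support := by
    rw [Walk.support_map]
    exact List.map_id' cyc.support
  rw [hsup] at hx hy hz
  have hlen : 0 < cyc.length := by
    have := hcyc.three_le_length
    omega
  have hcol := Fp_support_col cyc hlen rfl
  rcases hcol x hx with h1 | h1 <;> rcases hcol y hy with h2 | h2 <;>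
    rcases hcol z hz with h3 | h3 <;>
    first
      | exact hxy (h1.trans h2.symm)
      | exact hxz (h1.trans h3.symm)
      | exact hyz (h2.trans h3.symm)

/-! ### the parent-edge colour -/

noncomputable def midO (S : SubdivisionWitness G G') (u w : V) : Option W :=
  letI : Decidable (G.Adj u w) := Classical.dec _
  if h : G.Adj u w then some (mid S h) else none

noncomputable def pcol (S : SubdivisionWitness G G') {k l : ℕ} (φ : W → Fin k)
    (c : V → Fin l) (p q : Fin l) (v : V) : Option (Fin k) :=
  Option.map φ (midO S v (par (Fp G c p q) v))

lemma mid_congr {a x y : V} (hxy : x = y) (hx : G.Adj a x) (hy : G.Adj a y)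
    {S : SubdivisionWitness G G'} : mid S hx = mid S hy := by subst hxy; rfl

lemma pcol_comm (S : SubdivisionWitness G G') {k l : ℕ} (φ : W → Fin k)
    (c : V → Fin l) (p q : Fin l) : pcol S φ c p q = pcol S φ c q p := by
  unfold pcol
  rw [Fp_comm]

lemma pcol_eq_some (S : SubdivisionWitness G G') {k l : ℕ} (φ : W → Fin k)
    (c : V → Fin l) {p q : Fin l} {u w : V}
    (hpar : par (Fp G c p q) u = w) (hG : G.Adj u w) :
    pcol S φ c p q u = some (φ (mid S hG)) := by
  unfold pcol midO
  rw [hpar, dif_pos hG]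
  rfl

lemma pcol_inv (S : SubdivisionWitness G G') {k l : ℕ} (φ : W → Fin k)
    (c : V → Fin l) {p q : Fin l} {u : V} {o : Fin k}
    (h : pcol S φ c p q u = some o) :
    ∃ hadj : G.Adj u (par (Fp G c p q) u),
      (Fp G c p q).Adj u (par (Fp G c p q) u) ∧ o = φ (mid S hadj) := by
  unfold pcol midO at h
  split at h
  · next hadj =>
    refine ⟨hadj, ?_, ?_⟩
    · apply adj_par_of_dep_pos
      rcases Nat.eq_zero_or_pos (dep (Fp G c p q) u) with h0 | h0
      · exfalso
        have h1 : par (Fp G c p q) u = root (Fp G c p q) u :=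
          Walk.getVert_of_length_le _ (by unfold dep at h0; omega)
        have h2 : u = root (Fp G c p q) u := Walk.eq_of_length_eq_zero h0
        rw [h1, ← h2] at hadj
        exact G.loopless.irrefl u hadj
      · exact h0
    · simp only [Option.map_some] at h
      exact (Option.some_inj.mp h).symm
  · simp at h

/-! ### the palette and the colouring -/

/-- the palette -/
abbrev Pal (k l : ℕ) : Type :=
  Σ i : Fin l, Fin k × ({j : Fin l // j ≠ i} → Option (Fin k) × Fin 3)

noncomputable def psi (S : SubdivisionWitness G G') {k l : ℕ} (φ : W → Fin k)
    (c : V → Fin l) (v : V) : Pal k l :=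
  ⟨c v, (φ (S.emb v), fun j =>
    (pcol S φ c (c v) j.1 v, ⟨dep (Fp G c (c v) j.1) v % 3, by omega⟩))⟩

def projC {k l : ℕ} (z : Pal k l) : Fin l := z.1

def projPhi {k l : ℕ} (z : Pal k l) : Fin k := z.2.1

def projG {k l : ℕ} (j : Fin l) (z : Pal k l) : Option (Option (Fin k) × Fin 3) :=
  if h : j = z.1 then none else some (z.2.2 ⟨j, h⟩)

lemma projC_psi (S : SubdivisionWitness G G') {k l : ℕ} (φ : W → Fin k)
    (c : V → Fin l) (x : V) : projC (psi S φ c x) = c x := rfl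

lemma projPhi_psi (S : SubdivisionWitness G G') {k l : ℕ} (φ : W → Fin k)
    (c : V → Fin l) (x : V) : projPhi (psi S φ c x) = φ (S.emb x) := rfl

lemma projG_psi (S : SubdivisionWitness G G') {k l : ℕ} (φ : W → Fin k)
    (c : V → Fin l) (x : V) {j : Fin l} (hj : j ≠ c x) :
    projG j (psi S φ c x) =
      some (pcol S φ c (c x) j x, ⟨dep (Fp G c (c x) j) x % 3, by omega⟩) := by
  unfold projG psi
  rw [dif_neg hj]



variable {V W : Type*} {G : SimpleGraph V} {G' : SimpleGraph W}

/-- transfer of the midpoint colour along the repetition, for one edge pair -/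
lemma key_aux {k l : ℕ} (S : SubdivisionWitness G G')
    (hS : ∀ ⦃a b : V⦄ (h : G.Adj a b), (S.path h).length = 2)
    (φ : W → Fin k) (c : V → Fin l) (hc : AcyclicColoring G c)
    {x1 x2 y1 y2 : V} (hG1 : G.Adj x1 x2) (hG2 : G.Adj y1 y2)
    (hcx : c y1 = c x1) (hcy : c y2 = c x2)
    (hp1 : pcol S φ c (c x1) (c x2) x1 = pcol S φ c (c x1) (c x2) y1)
    (hd1 : dep (Fp G c (c x1) (c x2)) x1 % 3 = dep (Fp G c (c x1) (c x2)) y1 % 3)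
    (hp2 : pcol S φ c (c x2) (c x1) x2 = pcol S φ c (c x2) (c x1) y2)
    (hd2 : dep (Fp G c (c x2) (c x1)) x2 % 3 = dep (Fp G c (c x2) (c x1)) y2 % 3) :
    φ (mid S hG1) = φ (mid S hG2) := by
  have e1 : (Fp G c (c x1) (c x2)).Adj x1 x2 := ⟨hG1, Or.inl ⟨rfl, rfl⟩⟩
  have e2 : (Fp G c (c x1) (c x2)).Adj y1 y2 := ⟨hG2, Or.inl ⟨hcx, hcy⟩⟩
  have hFa : (Fp G c (c x1) (c x2)).IsAcyclic := Fp_acyclic hc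
  rw [Fp_comm c (c x2) (c x1)] at hd2
  rw [pcol_comm S φ c (c x2) (c x1)] at hp2
  rcases adj_dichotomy hFa e1 with h1 | h1
  · rcases adj_dichotomy hFa e2 with h2 | h2
    · have c1 := pcol_eq_some S φ c h1 hG1
      have c2 := pcol_eq_some S φ c h2 hG2
      rw [c1, c2] at hp1
      exact Option.some_inj.mp hp1
    · exfalso
      have d1 : dep (Fp G c (c x1) (c x2)) x1 = dep (Fp G c (c x1) (c x2)) x2 + 1 := by
        have := par_spec hFa (show (Fp G c (c x1) (c x2)).Adj x1
          (par (Fp G c (c x1) (c x2)) x1) by rw [h1]; exact e1)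
        rwa [h1] at this
      have d2 : dep (Fp G c (c x1) (c x2)) y2 = dep (Fp G c (c x1) (c x2)) y1 + 1 := by
        have := par_spec hFa (show (Fp G c (c x1) (c x2)).Adj y2
          (par (Fp G c (c x1) (c x2)) y2) by rw [h2]; exact e2.symm)
        rwa [h2] at this
      omega
  · rcases adj_dichotomy hFa e2 with h2 | h2
    · exfalso
      have d1 : dep (Fp G c (c x1) (c x2)) x2 = dep (Fp G c (c x1) (c x2)) x1 + 1 := by
        have := par_spec hFa (show (Fp G c (c x1) (c x2)).Adj x2
          (par (Fp G c (c x1) (c x2)) x2) by rw [h1]; exact e1.symm)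
        rwa [h1] at this
      have d2 : dep (Fp G c (c x1) (c x2)) y1 = dep (Fp G c (c x1) (c x2)) y2 + 1 := by
        have := par_spec hFa (show (Fp G c (c x1) (c x2)).Adj y1
          (par (Fp G c (c x1) (c x2)) y1) by rw [h2]; exact e2)
        rwa [h2] at this
      omega
    · have c1 := pcol_eq_some S φ c h1 hG1.symm
      have c2 := pcol_eq_some S φ c h2 hG2.symm
      rw [c1, c2] at hp2
      have := Option.some_inj.mp hp2
      rwa [mid_symm hS hG1, mid_symm hS hG2] at this



variable {V W : Type*} {G : SimpleGraph V} {G' : SimpleGraph W}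

set_option maxHeartbeats 1000000 in
lemma case1 {k l : ℕ} (S : SubdivisionWitness G G')
    (hS : ∀ ⦃a b : V⦄ (h : G.Adj a b), (S.path h).length = 2)
    (φ : W → Fin k) (hφ : NonRepColoring G' φ)
    (c : V → Fin l) (hc : AcyclicColoring G c)
    {s : ℕ} (hs2 : 2 ≤ s) (v : ℕ → V)
    (hdist : ∀ i, i < 2 * s → ∀ j, j < 2 * s → i ≠ j → v i ≠ v j)
    (hadj : ∀ i, i + 1 < 2 * s → G.Adj (v i) (v (i + 1)))
    (hrep : ∀ i, i < s → psi S φ c (v i) = psi S φ c (v (i + s)))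
    (hcase : par (Fp G c (c (v 0)) (c (v (s - 1)))) (v s) = v (s - 1)) : False := by
  classical
  have hvinj : ∀ i j, i < 2 * s → j < 2 * s → v i = v j → i = j := by
    intro i j hi hj he
    by_contra hne
    exact hdist i hi j hj hne he
  have hcv : ∀ t, t < s → c (v t) = c (v (t + s)) := fun t ht => by
    have := congrArg projC (hrep t ht)
    simpa [projC_psi] using this
  have hphiv : ∀ t, t < s → φ (S.emb (v t)) = φ (S.emb (v (t + s))) := fun t ht => by
    have := congrArg projPhi (hrep t ht)
    simpa [projPhi_psi] using this
  have hco : ∀ t, t < s → ∀ j : Fin l, j ≠ c (v t) →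
      pcol S φ c (c (v t)) j (v t) = pcol S φ c (c (v t)) j (v (t + s)) ∧
      dep (Fp G c (c (v t)) j) (v t) % 3 = dep (Fp G c (c (v t)) j) (v (t + s)) % 3 := by
    intro t ht j hj
    have h := congrArg (projG j) (hrep t ht)
    rw [projG_psi S φ c _ hj, projG_psi S φ c _ (fun he => hj (he.trans (hcv t ht).symm))] at h
    simp only [← hcv t ht] at h
    simp only [Option.some_inj, Prod.mk.injEq, Fin.mk.injEq] at h
    exact h
  -- the middle edge
  have hmidG : G.Adj (v (s - 1)) (v s) := by
    have := hadj (s - 1) (by omega)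
    rwa [show s - 1 + 1 = s from by omega] at this
  have hs0' : c (v 0) = c (v s) := by
    have := hcv 0 (by omega)
    rwa [show 0 + s = s from by omega] at this
  have hab' : c (v 0) ≠ c (v (s - 1)) := by
    rw [hs0']
    exact (hc.1 _ _ hmidG).symm
  have hFa : (Fp G c (c (v 0)) (c (v (s - 1)))).IsAcyclic := Fp_acyclic hc
  -- the key transfer of midpoint colours
  have key : ∀ t, t + s + 1 < 2 * s → ∀ (hG1 : G.Adj (v t) (v (t + 1)))
      (hG2 : G.Adj (v (t + s)) (v (t + s + 1))), φ (mid S hG1) = φ (mid S hG2) := by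
    intro t ht hG1 hG2
    have ht0 : t < s := by omega
    have ht1 : t + 1 < s := by omega
    have hA := hco t ht0 (c (v (t + 1))) (hc.1 _ _ hG1).symm
    have hB := hco (t + 1) ht1 (c (v t)) (hc.1 _ _ hG1)
    rw [show t + 1 + s = t + s + 1 from by omega] at hB
    have hcy : c (v (t + s + 1)) = c (v (t + 1)) := by
      have := hcv (t + 1) ht1
      rw [show t + 1 + s = t + s + 1 from by omega] at this
      exact this.symm
    exact key_aux S hS φ c hc hG1 hG2 (hcv t ht0).symm hcy hA.1 hA.2 hB.1 hB.2
  -- pcol of v s for the pair (c (v 0), c (v (s-1)))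
  have hpc_s : pcol S φ c (c (v 0)) (c (v (s - 1))) (v s) = some (φ (mid S hmidG.symm)) :=
    pcol_eq_some S φ c hcase hmidG.symm
  have h0 := hco 0 (by omega) (c (v (s - 1))) hab'.symm
  obtain ⟨h01, h02⟩ := h0
  rw [show 0 + s = s from by omega] at h01 h02
  rw [hpc_s] at h01
  obtain ⟨hGy, hFy, hval⟩ := pcol_inv S φ c h01
  -- the new neighbour is not v 1
  have hyne : par (Fp G c (c (v 0)) (c (v (s - 1)))) (v 0) ≠ v 1 := by
    intro hpar1
    have hF01 : (Fp G c (c (v 0)) (c (v (s - 1)))).Adj (v 0) (v 1) := by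
      rw [← hpar1]; exact hFy
    have hcv1 : c (v 1) = c (v (s - 1)) := by
      rcases hF01.2 with ⟨_, h⟩ | ⟨h, _⟩
      · exact h
      · exact absurd h hab'
    have d01 : dep (Fp G c (c (v 0)) (c (v (s - 1)))) (v 0)
        = dep (Fp G c (c (v 0)) (c (v (s - 1)))) (v 1) + 1 := by
      have := par_spec hFa (show (Fp G c (c (v 0)) (c (v (s - 1)))).Adj (v 0)
        (par (Fp G c (c (v 0)) (c (v (s - 1)))) (v 0)) by rw [hpar1]; exact hF01)
      rwa [hpar1] at this
    have hGs1 : G.Adj (v s) (v (s + 1)) := hadj s (by omega)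
    have hcs1 : c (v (s + 1)) = c (v (s - 1)) := by
      have h1 := hcv 1 (by omega)
      rw [show 1 + s = s + 1 from by omega] at h1
      rw [← h1]; exact hcv1
    have hFs1 : (Fp G c (c (v 0)) (c (v (s - 1)))).Adj (v s) (v (s + 1)) :=
      ⟨hGs1, Or.inl ⟨hs0'.symm, hcs1⟩⟩
    rcases adj_dichotomy hFa hFs1 with hd | hd
    · rw [hcase] at hd
      have := hvinj (s - 1) (s + 1) (by omega) (by omega) hd
      omega
    · have ds1 : dep (Fp G c (c (v 0)) (c (v (s - 1)))) (v (s + 1))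
          = dep (Fp G c (c (v 0)) (c (v (s - 1)))) (v s) + 1 := by
        have := par_spec hFa (show (Fp G c (c (v 0)) (c (v (s - 1)))).Adj (v (s + 1))
          (par (Fp G c (c (v 0)) (c (v (s - 1)))) (v (s + 1))) by rw [hd]; exact hFs1.symm)
        rwa [hd] at this
      have h12 := (hco 1 (by omega) (c (v 0)) (by rw [hcv1]; exact hab')).2
      rw [hcv1, Fp_comm c (c (v (s - 1))) (c (v 0)),
        show 1 + s = s + 1 from by omega] at h12
      omega
  -- now build the repetitive sequence in G'
  set y := par (Fp G c (c (v 0)) (c (v (s - 1)))) (v 0) with hy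
  set x0 : W := mid S hGy with hx0
  set emf : ℕ → W := fun t => if ht : t + 1 < 2 * s then mid S (hadj t ht) else x0 with hemf
  set w : ℕ → W := fun m =>
    if m = 0 then x0 else if m % 2 = 1 then S.emb (v ((m - 1) / 2)) else emf (m / 2 - 1)
    with hwdef
  have hw0 : w 0 = x0 := by simp [hwdef]
  have hwodd : ∀ m t, m = 2 * t + 1 → w m = S.emb (v t) := by
    intro m t hm
    subst hm
    simp only [hwdef]
    rw [if_neg (by omega), if_pos (by omega)]
    congr 2
    omega
  have hweven : ∀ m t, m = 2 * t + 2 → ∀ (ht : t + 1 < 2 * s), w m = mid S (hadj t ht) := by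
    intro m t hm ht
    subst hm
    simp only [hwdef]
    rw [if_neg (by omega), if_neg (by omega)]
    rw [show (2 * t + 2) / 2 - 1 = t from by omega]
    simp only [hemf]
    rw [dif_pos ht]
  -- distinctness helpers
  have hx0_ne_emb : ∀ z : V, S.emb z ≠ x0 := fun z => mid_ne_emb hS hGy z
  have hx0_ne_mid : ∀ t (ht : t + 1 < 2 * s), x0 ≠ mid S (hadj t ht) := by
    intro t ht
    apply mid_ne_mid hS hGy (hadj t ht)
    intro heq
    rw [Sym2.eq_iff] at heq
    rcases heq with ⟨h1, h2⟩ | ⟨h1, h2⟩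
    · have : (0 : ℕ) = t := hvinj 0 t (by omega) (by omega) h1
      subst this
      exact hyne h2
    · have : (0 : ℕ) = t + 1 := hvinj 0 (t + 1) (by omega) (by omega) h1
      omega
  have hmid_ne_mid : ∀ t t' (ht : t + 1 < 2 * s) (ht' : t' + 1 < 2 * s), t ≠ t' →
      mid S (hadj t ht) ≠ mid S (hadj t' ht') := by
    intro t t' ht ht' htt
    apply mid_ne_mid hS (hadj t ht) (hadj t' ht')
    intro heq
    rw [Sym2.eq_iff] at heq
    rcases heq with ⟨h1, h2⟩ | ⟨h1, h2⟩
    · exact htt (hvinj t t' (by omega) (by omega) h1)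
    · have e1 : t = t' + 1 := hvinj t (t' + 1) (by omega) (by omega) h1
      have e2 : t + 1 = t' := hvinj (t + 1) t' (by omega) (by omega) h2
      omega
  -- distinctness
  have hdw : ∀ i, i < 2 * (2 * s) → ∀ j, j < 2 * (2 * s) → i ≠ j → w i ≠ w j := by
    have main : ∀ i j, i < 4 * s → j < 4 * s → i < j → w i ≠ w j := by
      intro i j hi hj hij
      rcases Nat.eq_zero_or_pos i with rfl | hi0
      · -- i = 0 : w i = x0
        rw [hw0]
        rcases Nat.even_or_odd j with ⟨tj, htj⟩ | ⟨tj, htj⟩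
        · -- j even > 0 : w j = mid
          obtain ⟨t, rfl⟩ : ∃ t, j = 2 * t + 2 := ⟨tj - 1, by omega⟩
          rw [hweven _ t rfl (by omega)]
          exact hx0_ne_mid t (by omega)
        · obtain ⟨t, rfl⟩ : ∃ t, j = 2 * t + 1 := ⟨tj, by omega⟩
          rw [hwodd _ t rfl]
          exact (hx0_ne_emb (v t)).symm
      · rcases Nat.even_or_odd i with ⟨ti, hti⟩ | ⟨ti, hti⟩ <;>
          rcases Nat.even_or_odd j with ⟨tj, htj⟩ | ⟨tj, htj⟩
        · -- both even, both > 0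
          obtain ⟨t, rfl⟩ : ∃ t, i = 2 * t + 2 := ⟨ti - 1, by omega⟩
          obtain ⟨t', rfl⟩ : ∃ t', j = 2 * t' + 2 := ⟨tj - 1, by omega⟩
          rw [hweven _ t rfl (by omega), hweven _ t' rfl (by omega)]
          exact hmid_ne_mid t t' (by omega) (by omega) (by omega)
        · -- i even, j odd
          obtain ⟨t, rfl⟩ : ∃ t, i = 2 * t + 2 := ⟨ti - 1, by omega⟩
          obtain ⟨t', rfl⟩ : ∃ t', j = 2 * t' + 1 := ⟨tj, by omega⟩
          rw [hweven _ t rfl (by omega), hwodd _ t' rfl]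
          exact (mid_ne_emb hS (hadj t (by omega)) (v t')).symm
        · -- i odd, j even
          obtain ⟨t, rfl⟩ : ∃ t, i = 2 * t + 1 := ⟨ti, by omega⟩
          obtain ⟨t', rfl⟩ : ∃ t', j = 2 * t' + 2 := ⟨tj - 1, by omega⟩
          rw [hwodd _ t rfl, hweven _ t' rfl (by omega)]
          exact mid_ne_emb hS (hadj t' (by omega)) (v t)
        · -- both odd
          obtain ⟨t, rfl⟩ : ∃ t, i = 2 * t + 1 := ⟨ti, by omega⟩
          obtain ⟨t', rfl⟩ : ∃ t', j = 2 * t' + 1 := ⟨tj, by omega⟩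
          rw [hwodd _ t rfl, hwodd _ t' rfl]
          intro he
          have := hvinj t t' (by omega) (by omega) (S.emb.injective he)
          omega
    intro i hi j hj hij
    rcases Nat.lt_or_ge i j with h | h
    · exact main i j (by omega) (by omega) h
    · exact (main j i (by omega) (by omega) (by omega)).symm
  -- adjacency
  have haw : ∀ i, i + 1 < 2 * (2 * s) → G'.Adj (w i) (w (i + 1)) := by
    intro i hi
    rcases Nat.eq_zero_or_pos i with rfl | hi0
    · rw [hw0, hwodd (0 + 1) 0 (by omega)]
      exact (mid_adj_left hS hGy).symm
    rcases Nat.even_or_odd i with ⟨ti, hti⟩ | ⟨ti, hti⟩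
    · -- i even > 0 : w i = mid e_t, w (i+1) = emb (v (t+1))
      obtain ⟨t, rfl⟩ : ∃ t, i = 2 * t + 2 := ⟨ti - 1, by omega⟩
      rw [hweven _ t rfl (by omega), hwodd (2 * t + 2 + 1) (t + 1) (by omega)]
      exact mid_adj_right hS (hadj t (by omega))
    · -- i odd : w i = emb (v t), w (i+1) = mid e_t
      obtain ⟨t, rfl⟩ : ∃ t, i = 2 * t + 1 := ⟨ti, by omega⟩
      rw [hwodd _ t rfl, hweven (2 * t + 1 + 1) t (by omega) (by omega)]
      exact mid_adj_left hS (hadj t (by omega))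
  -- repetition
  have hwrep : ∀ i, i < 2 * s → φ (w i) = φ (w (i + 2 * s)) := by
    intro i hi
    rcases Nat.eq_zero_or_pos i with rfl | hi0
    · rw [hw0, hweven (0 + 2 * s) (s - 1) (by omega) (by omega)]
      calc φ x0 = φ (mid S hmidG.symm) := hval.symm
        _ = φ (mid S hmidG) := congrArg φ (mid_symm hS hmidG)
        _ = φ (mid S (hadj (s - 1) (by omega : s - 1 + 1 < 2 * s))) :=
            congrArg φ (mid_congr (congrArg v (by omega : s = s - 1 + 1)) hmidG
              (hadj (s - 1) (by omega)))
    rcases Nat.even_or_odd i with ⟨ti, hti⟩ | ⟨ti, hti⟩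
    · -- even : midpoint pair, use key
      obtain ⟨t, rfl⟩ : ∃ t, i = 2 * t + 2 := ⟨ti - 1, by omega⟩
      rw [hweven _ t rfl (by omega), hweven (2 * t + 2 + 2 * s) (t + s) (by omega) (by omega)]
      exact key t (by omega) (hadj t (by omega)) (hadj (t + s) (by omega))
    · -- odd : embedded vertices, use hphiv
      obtain ⟨t, rfl⟩ : ∃ t, i = 2 * t + 1 := ⟨ti, by omega⟩
      rw [hwodd _ t rfl, hwodd (2 * t + 1 + 2 * s) (t + s) (by omega)]
      exact hphiv t (by omega)
  exact hφ (2 * s) (by omega) w hdw haw hwrep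



variable {V W : Type*} {G : SimpleGraph V} {G' : SimpleGraph W}

lemma main_nonrep {k l : ℕ} (S : SubdivisionWitness G G')
    (hS : ∀ ⦃a b : V⦄ (h : G.Adj a b), (S.path h).length = 2)
    (φ : W → Fin k) (hφ : NonRepColoring G' φ)
    (c : V → Fin l) (hc : AcyclicColoring G c) :
    NonRepColoring G (psi S φ c) := by
  intro s hs v hdist hadj hrep
  rcases Nat.lt_or_ge s 2 with hs1 | hs2
  · -- s = 1 : contradicts properness
    have hs1' : s = 1 := by omega
    subst hs1'
    have h := congrArg projC (hrep 0 (by omega))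
    simp only [projC_psi] at h
    exact hc.1 _ _ (hadj 0 (by omega)) h
  · have hmidG : G.Adj (v (s - 1)) (v s) := by
      have := hadj (s - 1) (by omega)
      rwa [show s - 1 + 1 = s from by omega] at this
    have hcv : ∀ t, t < s → c (v t) = c (v (t + s)) := fun t ht => by
      have := congrArg projC (hrep t ht)
      simpa [projC_psi] using this
    have hs0' : c (v 0) = c (v s) := by
      have := hcv 0 (by omega)
      rwa [show 0 + s = s from by omega] at this
    have hmidF : (Fp G c (c (v 0)) (c (v (s - 1)))).Adj (v s) (v (s - 1)) :=
      ⟨hmidG.symm, Or.inl ⟨hs0'.symm, rfl⟩⟩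
    rcases adj_dichotomy (Fp_acyclic hc) hmidF with hd | hd
    · exact case1 S hS φ hφ c hc hs2 v hdist hadj hrep hd
    · -- apply case1 to the reversed path
      refine case1 S hS φ hφ c hc hs2 (fun t => v (2 * s - 1 - t)) ?_ ?_ ?_ ?_
      · intro i hi j hj hij he
        exact hdist (2 * s - 1 - i) (by omega) (2 * s - 1 - j) (by omega) (by omega) he
      · intro i hi
        rw [show 2 * s - 1 - (i + 1) = 2 * s - 2 - i from by omega,
          show 2 * s - 1 - i = 2 * s - 2 - i + 1 from by omega]
        exact (hadj (2 * s - 2 - i) (by omega)).symm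
      · intro i hi
        rw [show 2 * s - 1 - i = s - 1 - i + s from by omega,
          show 2 * s - 1 - (i + s) = s - 1 - i from by omega]
        exact (hrep (s - 1 - i) (by omega)).symm
      · rw [show 2 * s - 1 - 0 = 2 * s - 1 from by omega,
          show 2 * s - 1 - (s - 1) = s from by omega,
          show 2 * s - 1 - s = s - 1 from by omega]
        have hc2s : c (v (2 * s - 1)) = c (v (s - 1)) := by
          have := hcv (s - 1) (by omega)
          rw [show s - 1 + s = 2 * s - 1 from by omega] at this
          exact this.symm
        rw [hc2s, Fp_comm c (c (v (s - 1))) (c (v s)), ← hs0']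
        exact hd



variable {V W : Type*} {G : SimpleGraph V} {G' : SimpleGraph W}

lemma nonRep_comp {α β : Type*} {f : V → α} (hf : NonRepColoring G f) {g : α → β}
    (hg : Function.Injective g) : NonRepColoring G (fun x => g (f x)) :=
  fun s hs v hd ha hrep => hf s hs v hd ha (fun i hi => hg (hrep i hi))

lemma exists_injective_nonrep [Fintype V] (G : SimpleGraph V) :
    NonRepColoring G (fun x => Fintype.equivFin V x) := by
  intro s hs v hd ha hrep
  have h := hrep 0 hs
  exact hd 0 (by omega) (0 + s) (by omega) (by omega) ((Fintype.equivFin V).injective h)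

lemma piNum_le [Fintype V] {α : Type*} [Fintype α] (f : V → α)
    (hf : NonRepColoring G f) {N : ℕ} (hN : Fintype.card α ≤ N) : piNum G ≤ N :=
  Nat.sInf_le ⟨fun x => Fin.castLE hN (Fintype.equivFin α (f x)),
    nonRep_comp hf ((Fin.castLE_injective hN).comp (Fintype.equivFin α).injective)⟩

lemma exists_nonrep_fin [Fintype W] {k : ℕ} (hk : piNum G' ≤ k) :
    ∃ φ : W → Fin k, NonRepColoring G' φ := by
  have hne : {n : ℕ | ∃ f : W → Fin n, NonRepColoring G' f}.Nonempty :=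
    ⟨Fintype.card W, fun x => Fintype.equivFin W x, exists_injective_nonrep G'⟩
  obtain ⟨f, hf⟩ := Nat.sInf_mem hne
  have hle : sInf {n : ℕ | ∃ f : W → Fin n, NonRepColoring G' f} ≤ k := hk
  exact ⟨fun x => Fin.castLE hle (f x), nonRep_comp hf (Fin.castLE_injective hle)⟩

lemma acyclic_comp {α β : Type*} {f : V → α} (hf : AcyclicColoring G f) {g : α → β}
    (hg : Function.Injective g) : AcyclicColoring G (fun x => g (f x)) := by
  constructor
  · intro u w h he
    exact hf.1 u w h (hg he)
  · intro u cw hcyc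
    obtain ⟨x, hx, y, hy, z, hz, hxy, hxz, hyz⟩ := hf.2 u cw hcyc
    exact ⟨x, hx, y, hy, z, hz, fun he => hxy (hg he), fun he => hxz (hg he),
      fun he => hyz (hg he)⟩

lemma exists_injective_acyclic [Fintype V] (G : SimpleGraph V) :
    AcyclicColoring G (fun x => Fintype.equivFin V x) := by
  constructor
  · intro u w h he
    exact h.ne ((Fintype.equivFin V).injective he)
  · intro u cw hcyc
    have h3 : 3 ≤ cw.length := hcyc.three_le_length
    have hnd : cw.support.tail.Nodup := hcyc.support_nodup
    have hlen : cw.support.tail.length = cw.length := by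
      have := cw.length_support
      simp only [List.length_tail, this]
      omega
    have h0 : (0 : ℕ) < cw.support.tail.length := by omega
    have h1 : (1 : ℕ) < cw.support.tail.length := by omega
    have h2 : (2 : ℕ) < cw.support.tail.length := by omega
    refine ⟨cw.support.tail.get ⟨0, h0⟩, List.mem_of_mem_tail (List.get_mem _ _),
      cw.support.tail.get ⟨1, h1⟩, List.mem_of_mem_tail (List.get_mem _ _),
      cw.support.tail.get ⟨2, h2⟩, List.mem_of_mem_tail (List.get_mem _ _), ?_, ?_, ?_⟩ <;>
    · intro he
      have := (Fintype.equivFin V).injective he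
      have := hnd.get_inj_iff.mp this
      simp at this

lemma exists_acyclic_fin [Fintype V] {l : ℕ} (hl : chiA G ≤ l) :
    ∃ c : V → Fin l, AcyclicColoring G c := by
  have hne : {n : ℕ | ∃ f : V → Fin n, AcyclicColoring G f}.Nonempty :=
    ⟨Fintype.card V, fun x => Fintype.equivFin V x, exists_injective_acyclic G⟩
  obtain ⟨f, hf⟩ := Nat.sInf_mem hne
  have hle : sInf {n : ℕ | ∃ f : V → Fin n, AcyclicColoring G f} ≤ l := hl
  exact ⟨fun x => Fin.castLE hle (f x), acyclic_comp hf (Fin.castLE_injective hle)⟩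

lemma card_pal (k l : ℕ) : Fintype.card (Pal k l) = l * (k * ((k + 1) * 3) ^ (l - 1)) := by
  classical
  rw [Fintype.card_sigma]
  have hcard : ∀ i : Fin l,
      Fintype.card (Fin k × ({j : Fin l // j ≠ i} → Option (Fin k) × Fin 3))
        = k * ((k + 1) * 3) ^ (l - 1) := by
    intro i
    rw [Fintype.card_prod, Fintype.card_fun, Fintype.card_fin]
    congr 1
    rw [Fintype.card_prod, Fintype.card_option, Fintype.card_fin, Fintype.card_fin]
    congr 1
    rw [Fintype.card_subtype_compl, Fintype.card_subtype_eq, Fintype.card_fin]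
  rw [Finset.sum_congr rfl fun i _ => hcard i, Finset.sum_const, Finset.card_univ,
    Fintype.card_fin, smul_eq_mul]

lemma arith (k l : ℕ) (hl : l ≠ 1) :
    l * (k * ((k + 1) * 3) ^ (l - 1)) ≤ l * (k * (k + 1) * (2 * k + 1)) ^ (l - 1) := by
  rcases Nat.eq_zero_or_pos l with rfl | hl0
  · simp
  rcases Nat.eq_zero_or_pos k with rfl | hk0
  · simp
  apply Nat.mul_le_mul_left
  have h1 : (k * (k + 1) * (2 * k + 1)) ^ (l - 1)
      = k ^ (l - 1) * ((k + 1) ^ (l - 1) * (2 * k + 1) ^ (l - 1)) := by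
    rw [mul_pow, mul_pow, mul_assoc]
  rw [h1, mul_pow]
  exact Nat.mul_le_mul (Nat.le_self_pow (by omega) k)
    (Nat.mul_le_mul_left _ (Nat.pow_le_pow_left (by omega) _))


end Stmt14Aux
end Stmt14AuxSec

/-- Let `G'` be the `1`-subdivision of `G`. If `π(G') ≤ k` and `χₐ(G) ≤ ℓ`,
then `π(G) ≤ ℓ·(k(k+1)(2k+1))^{ℓ−1}`. -/
theorem stmt_14 {V W : Type*} [Fintype V] [Fintype W]
    (G : SimpleGraph V) (G' : SimpleGraph W) (hsub : IsExactSubdivision 1 G G')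
    (k l : ℕ) (hk : piNum G' ≤ k) (hl : chiA G ≤ l) :
    piNum G ≤ l * (k * (k + 1) * (2 * k + 1)) ^ (l - 1) := by
  classical
  obtain ⟨S, hS⟩ := hsub
  have hS2 : ∀ ⦃a b : V⦄ (h : G.Adj a b), (S.path h).length = 2 := fun a b h => by
    have := hS h
    omega
  obtain ⟨φ, hφ⟩ := Stmt14Aux.exists_nonrep_fin hk
  obtain ⟨c, hc⟩ := Stmt14Aux.exists_acyclic_fin hl
  rcases eq_or_ne l 1 with rfl | hl1
  · have hone : NonRepColoring G (fun _ : V => (0 : Fin 1)) := by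
      intro s hs v hd ha hrep
      exact hc.1 _ _ (ha 0 (by omega)) (Subsingleton.elim _ _)
    have := Stmt14Aux.piNum_le _ hone (by simp : Fintype.card (Fin 1) ≤ 1)
    simpa using this
  · exact Stmt14Aux.piNum_le _ (Stmt14Aux.main_nonrep S hS2 φ hφ c hc)
      (by rw [Stmt14Aux.card_pal]; exact Stmt14Aux.arith k l hl1)
end

section
/- If the 1-subdivision G' of a graph G admits a non-repetitive colouring with k colours, then χ_a(G) ≤ k·2^{2k²}. -/
open SimpleGraph MeasureTheory Filter

/-! ### Auxiliary machinery for Statement 15 -/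

namespace St15

variable {V W : Type*} {G : SimpleGraph V} {G' : SimpleGraph W}

lemma getVert_mem_support {u v : W} (p : G'.Walk u v) (i : ℕ) :
    p.getVert i ∈ p.support := by
  induction p generalizing i with
  | nil => cases i <;> simp [SimpleGraph.Walk.getVert]
  | cons h q ih =>
    cases i with
    | zero => simp
    | succ n =>
      rw [SimpleGraph.Walk.getVert_cons_succ]
      simp only [SimpleGraph.Walk.support_cons, List.mem_cons]
      exact Or.inr (ih n)

lemma support_eq_map {u v : W} (p : G'.Walk u v) :
    p.support = (List.range (p.length + 1)).map p.getVert := by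
  induction p with
  | nil => simp [SimpleGraph.Walk.getVert]
  | cons h q ih =>
    have hfun : (SimpleGraph.Walk.cons h q).getVert ∘ Nat.succ = q.getVert :=
      funext fun n => SimpleGraph.Walk.getVert_cons_succ q h
    rw [SimpleGraph.Walk.support_cons, SimpleGraph.Walk.length_cons, List.range_succ_eq_map,
      List.map_cons, List.map_map, hfun, ← ih]
    rfl

lemma cycle_getVert_injOn {u : W} {p : G'.Walk u u} (hp : p.IsCycle)
    {i j : ℕ} (hi : 1 ≤ i) (hij : i < j) (hj : j ≤ p.length) :
    p.getVert i ≠ p.getVert j := by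
  intro heq
  have hnd := hp.support_nodup
  have htail : p.support.tail = (List.range p.length).map (fun t => p.getVert (t + 1)) := by
    rw [support_eq_map p, List.range_succ_eq_map, List.map_cons]
    simp [List.map_map, Function.comp_def]
  rw [htail] at hnd
  have h1 : i - 1 < ((List.range p.length).map (fun t => p.getVert (t + 1))).length := by
    simp; omega
  have h2 : j - 1 < ((List.range p.length).map (fun t => p.getVert (t + 1))).length := by
    simp; omega
  have e1 : ((List.range p.length).map (fun t => p.getVert (t + 1)))[i-1]'h1 = p.getVert i := by
    simp only [List.getElem_map, List.getElem_range]
    congr 1; omega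
  have e2 : ((List.range p.length).map (fun t => p.getVert (t + 1)))[j-1]'h2 = p.getVert j := by
    simp only [List.getElem_map, List.getElem_range]
    congr 1; omega
  have := (hnd.getElem_inj_iff).mp (e1.trans (heq.trans e2.symm))
  omega

def seq4 (y0 y1 y2 y3 : W) : ℕ → W
  | 0 => y0
  | 1 => y1
  | 2 => y2
  | _ => y3

@[simp] lemma seq4_0 (y0 y1 y2 y3 : W) : seq4 y0 y1 y2 y3 0 = y0 := rfl
@[simp] lemma seq4_1 (y0 y1 y2 y3 : W) : seq4 y0 y1 y2 y3 1 = y1 := rfl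
@[simp] lemma seq4_2 (y0 y1 y2 y3 : W) : seq4 y0 y1 y2 y3 2 = y2 := rfl
@[simp] lemma seq4_3 (y0 y1 y2 y3 : W) : seq4 y0 y1 y2 y3 3 = y3 := rfl

def seq8 (y0 y1 y2 y3 y4 y5 y6 y7 : W) : ℕ → W
  | 0 => y0
  | 1 => y1
  | 2 => y2
  | 3 => y3
  | 4 => y4
  | 5 => y5
  | 6 => y6
  | _ => y7

@[simp] lemma seq8_0 (y0 y1 y2 y3 y4 y5 y6 y7 : W) : seq8 y0 y1 y2 y3 y4 y5 y6 y7 0 = y0 := rfl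
@[simp] lemma seq8_1 (y0 y1 y2 y3 y4 y5 y6 y7 : W) : seq8 y0 y1 y2 y3 y4 y5 y6 y7 1 = y1 := rfl
@[simp] lemma seq8_2 (y0 y1 y2 y3 y4 y5 y6 y7 : W) : seq8 y0 y1 y2 y3 y4 y5 y6 y7 2 = y2 := rfl
@[simp] lemma seq8_3 (y0 y1 y2 y3 y4 y5 y6 y7 : W) : seq8 y0 y1 y2 y3 y4 y5 y6 y7 3 = y3 := rfl
@[simp] lemma seq8_4 (y0 y1 y2 y3 y4 y5 y6 y7 : W) : seq8 y0 y1 y2 y3 y4 y5 y6 y7 4 = y4 := rfl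
@[simp] lemma seq8_5 (y0 y1 y2 y3 y4 y5 y6 y7 : W) : seq8 y0 y1 y2 y3 y4 y5 y6 y7 5 = y5 := rfl
@[simp] lemma seq8_6 (y0 y1 y2 y3 y4 y5 y6 y7 : W) : seq8 y0 y1 y2 y3 y4 y5 y6 y7 6 = y6 := rfl
@[simp] lemma seq8_7 (y0 y1 y2 y3 y4 y5 y6 y7 : W) : seq8 y0 y1 y2 y3 y4 y5 y6 y7 7 = y7 := rfl

lemma no_rep4 {k : ℕ} {f : W → Fin k} (hf : NonRepColoring G' f) {y0 y1 y2 y3 : W}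
    (a01 : G'.Adj y0 y1) (a12 : G'.Adj y1 y2) (a23 : G'.Adj y2 y3)
    (d02 : y0 ≠ y2) (d03 : y0 ≠ y3) (d13 : y1 ≠ y3)
    (c02 : f y0 = f y2) (c13 : f y1 = f y3) : False := by
  have d01 : y0 ≠ y1 := a01.ne
  have d12 : y1 ≠ y2 := a12.ne
  have d23 : y2 ≠ y3 := a23.ne
  refine hf 2 (by norm_num) (seq4 y0 y1 y2 y3) ?_ ?_ ?_
  · intro i hi j hj hij
    have hi' : i < 4 := by omega
    have hj' : j < 4 := by omega
    interval_cases i <;> interval_cases j <;>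
      first
        | exact absurd rfl hij
        | (simp only [seq4_0, seq4_1, seq4_2, seq4_3]
           first
             | assumption
             | exact Ne.symm (by assumption))
  · intro i hi
    have hi' : i < 3 := by omega
    interval_cases i <;> simpa using (by assumption : G'.Adj _ _)
  · intro i hi
    interval_cases i
    · simpa using c02
    · simpa using c13

lemma no_rep8 {k : ℕ} {f : W → Fin k} (hf : NonRepColoring G' f)
    {y0 y1 y2 y3 y4 y5 y6 y7 : W}
    (a01 : G'.Adj y0 y1) (a12 : G'.Adj y1 y2) (a23 : G'.Adj y2 y3) (a34 : G'.Adj y3 y4)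
    (a45 : G'.Adj y4 y5) (a56 : G'.Adj y5 y6) (a67 : G'.Adj y6 y7)
    (d02 : y0 ≠ y2) (d03 : y0 ≠ y3) (d04 : y0 ≠ y4) (d05 : y0 ≠ y5) (d06 : y0 ≠ y6)
    (d07 : y0 ≠ y7) (d13 : y1 ≠ y3) (d14 : y1 ≠ y4) (d15 : y1 ≠ y5) (d16 : y1 ≠ y6)
    (d17 : y1 ≠ y7) (d24 : y2 ≠ y4) (d25 : y2 ≠ y5) (d26 : y2 ≠ y6) (d27 : y2 ≠ y7)
    (d35 : y3 ≠ y5) (d36 : y3 ≠ y6) (d37 : y3 ≠ y7) (d46 : y4 ≠ y6) (d47 : y4 ≠ y7)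
    (d57 : y5 ≠ y7)
    (c04 : f y0 = f y4) (c15 : f y1 = f y5) (c26 : f y2 = f y6) (c37 : f y3 = f y7) :
    False := by
  have d01 : y0 ≠ y1 := a01.ne
  have d12 : y1 ≠ y2 := a12.ne
  have d23 : y2 ≠ y3 := a23.ne
  have d34 : y3 ≠ y4 := a34.ne
  have d45 : y4 ≠ y5 := a45.ne
  have d56 : y5 ≠ y6 := a56.ne
  have d67 : y6 ≠ y7 := a67.ne
  refine hf 4 (by norm_num) (seq8 y0 y1 y2 y3 y4 y5 y6 y7) ?_ ?_ ?_
  · intro i hi j hj hij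
    have hi' : i < 8 := by omega
    have hj' : j < 8 := by omega
    interval_cases i <;> interval_cases j <;>
      first
        | exact absurd rfl hij
        | (simp only [seq8_0, seq8_1, seq8_2, seq8_3, seq8_4, seq8_5, seq8_6, seq8_7]
           first
             | assumption
             | exact Ne.symm (by assumption))
  · intro i hi
    have hi' : i < 7 := by omega
    interval_cases i <;> simpa using (by assumption : G'.Adj _ _)
  · intro i hi
    interval_cases i
    · simpa using c04
    · simpa using c15
    · simpa using c26
    · simpa using c37

def mid (S : SubdivisionWitness G G') {a b : V} (h : G.Adj a b) : W :=
  (S.path h).getVert 1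

variable (S : SubdivisionWitness G G')
variable (hlen : ∀ ⦃a b : V⦄ (h : G.Adj a b), (S.path h).length = 2)

include hlen

lemma adj_emb_mid {a b : V} (h : G.Adj a b) : G'.Adj (S.emb a) (mid S h) := by
  have h0 : (0:ℕ) < (S.path h).length := by rw [hlen h]; norm_num
  have := (S.path h).adj_getVert_succ h0
  rwa [SimpleGraph.Walk.getVert_zero] at this

lemma adj_mid_emb {a b : V} (h : G.Adj a b) : G'.Adj (mid S h) (S.emb b) := by
  have h1 : (1:ℕ) < (S.path h).length := by rw [hlen h]; norm_num
  have h2 : (S.path h).getVert 2 = S.emb b :=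
    (S.path h).getVert_of_length_le (by rw [hlen h])
  have := (S.path h).adj_getVert_succ h1
  rwa [h2] at this

lemma emb_ne_mid {a b : V} (h : G.Adj a b) (x : V) : S.emb x ≠ mid S h := by
  intro hx
  have hmem : S.emb x ∈ (S.path h).support := by
    rw [hx]; exact getVert_mem_support _ 1
  rcases S.internal_new h x hmem with rfl | rfl
  · exact (adj_emb_mid S hlen h).ne hx
  · exact (adj_mid_emb S hlen h).ne hx.symm

lemma mid_eq_sym2 {a b a' b' : V} (h : G.Adj a b) (h' : G.Adj a' b')
    (he : mid S h = mid S h') : s(a, b) = s(a', b') := by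
  by_contra hne
  obtain ⟨x, hx⟩ := S.internally_disjoint h h' hne (mid S h)
    (getVert_mem_support _ 1) (by rw [he]; exact getVert_mem_support _ 1)
  exact emb_ne_mid S hlen h x hx

lemma mid_symm {a b : V} (h : G.Adj a b) : mid S h.symm = mid S h := by
  unfold mid
  rw [S.path_symm h, SimpleGraph.Walk.getVert_reverse, hlen h]

variable {k : ℕ} {f : W → Fin k} (hf : NonRepColoring G' f)

include hf

/-- Repetitive path `emb a – mid(ab) – emb b – mid(bw)`. -/
lemma path4 {a b w : V} (hab : G.Adj a b) (hbw : G.Adj b w) (hwa : w ≠ a)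
    (hc1 : f (S.emb a) = f (S.emb b)) (hc2 : f (mid S hab) = f (mid S hbw)) : False := by
  refine no_rep4 hf (adj_emb_mid S hlen hab) (adj_mid_emb S hlen hab)
    (adj_emb_mid S hlen hbw) ?_ ?_ ?_ hc1 hc2
  · exact fun he => hab.ne (S.emb.injective he)
  · exact emb_ne_mid S hlen hbw a
  · intro he
    rcases (Sym2.eq_iff.mp (mid_eq_sym2 S hlen hab hbw he)) with ⟨h1, h2⟩ | ⟨h1, h2⟩
    · exact hab.ne h1
    · exact hwa h1.symm

/-- Repetitive path `mid(cd) – emb d – mid(bd) – emb b`. -/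
lemma path4' {b c d : V} (hcd : G.Adj c d) (hbd : G.Adj b d) (hbc : b ≠ c) (hbd' : b ≠ d)
    (hc1 : f (S.emb b) = f (S.emb d)) (hc2 : f (mid S hcd) = f (mid S hbd)) : False := by
  refine no_rep4 hf (adj_mid_emb S hlen hcd) (adj_mid_emb S hlen hbd).symm
    (adj_emb_mid S hlen hbd).symm ?_ ?_ ?_ hc2 hc1.symm
  · intro he
    rcases (Sym2.eq_iff.mp (mid_eq_sym2 S hlen hcd hbd he)) with ⟨h1, h2⟩ | ⟨h1, h2⟩
    · exact hbc h1.symm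
    · exact hcd.ne h1
  · exact (emb_ne_mid S hlen hcd b).symm
  · exact fun he => hbd' (S.emb.injective he.symm)

/-- Repetitive path
`emb a – mid(ab) – emb b – mid(bc) – emb c – mid(cd) – emb d – mid(de)`. -/
lemma path8 {a b c d e : V}
    (h1 : G.Adj a b) (h2 : G.Adj b c) (h3 : G.Adj c d) (h4 : G.Adj d e)
    (hab : a ≠ b) (hac : a ≠ c) (had : a ≠ d) (hbc : b ≠ c) (hbd : b ≠ d)
    (hcd : c ≠ d) (hce : c ≠ e)
    (cac : f (S.emb a) = f (S.emb c)) (cbd : f (S.emb b) = f (S.emb d))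
    (c13 : f (mid S h1) = f (mid S h3)) (c24 : f (mid S h2) = f (mid S h4)) : False := by
  have mm : ∀ {x y z w : V} (hxy : G.Adj x y) (hzw : G.Adj z w),
      ¬(x = z ∧ y = w ∨ x = w ∧ y = z) → mid S hxy ≠ mid S hzw := by
    intro x y z w hxy hzw hs he
    exact hs (Sym2.eq_iff.mp (mid_eq_sym2 S hlen hxy hzw he))
  refine no_rep8 hf
    (adj_emb_mid S hlen h1) (adj_mid_emb S hlen h1)
    (adj_emb_mid S hlen h2) (adj_mid_emb S hlen h2)
    (adj_emb_mid S hlen h3) (adj_mid_emb S hlen h3)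
    (adj_emb_mid S hlen h4)
    (fun he => hab (S.emb.injective he))
    (emb_ne_mid S hlen h2 a)
    (fun he => hac (S.emb.injective he))
    (emb_ne_mid S hlen h3 a)
    (fun he => had (S.emb.injective he))
    (emb_ne_mid S hlen h4 a)
    (mm h1 h2 ?_)
    ((emb_ne_mid S hlen h1 c).symm)
    (mm h1 h3 ?_)
    ((emb_ne_mid S hlen h1 d).symm)
    (mm h1 h4 ?_)
    (fun he => hbc (S.emb.injective he))
    (emb_ne_mid S hlen h3 b)
    (fun he => hbd (S.emb.injective he))
    (emb_ne_mid S hlen h4 b)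
    (mm h2 h3 ?_)
    ((emb_ne_mid S hlen h2 d).symm)
    (mm h2 h4 ?_)
    (fun he => hcd (S.emb.injective he))
    (emb_ne_mid S hlen h4 c)
    (mm h3 h4 ?_)
    cac c13 cbd c24
  · rintro (⟨e1, e2⟩ | ⟨e1, e2⟩)
    · exact h1.ne e1
    · exact hac e1
  · rintro (⟨e1, e2⟩ | ⟨e1, e2⟩)
    · exact hac e1
    · exact had e1
  · rintro (⟨e1, e2⟩ | ⟨e1, e2⟩)
    · exact had e1
    · exact hbd e2
  · rintro (⟨e1, e2⟩ | ⟨e1, e2⟩)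
    · exact h2.ne e1
    · exact hbd e1
  · rintro (⟨e1, e2⟩ | ⟨e1, e2⟩)
    · exact hbd e1
    · exact hcd e2
  · rintro (⟨e1, e2⟩ | ⟨e1, e2⟩)
    · exact h3.ne e1
    · exact hce e1

def upP (S : SubdivisionWitness G G') {k : ℕ} (f : W → Fin k) (ρ : V → ℕ) (v : V)
    (p : Fin k × Fin k) : Prop :=
  ∃ w, ∃ h : G.Adj v w, ρ v < ρ w ∧ f (S.emb w) = p.1 ∧ f (mid S h) = p.2

def downP (S : SubdivisionWitness G G') {k : ℕ} (f : W → Fin k) (ρ : V → ℕ) (v : V)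
    (p : Fin k × Fin k) : Prop :=
  ∃ w, ∃ h : G.Adj v w, ρ w < ρ v ∧ f (S.emb w) = p.1 ∧ f (mid S h) = p.2

def phi (S : SubdivisionWitness G G') {k : ℕ} (f : W → Fin k) (ρ : V → ℕ) (v : V) :
    Fin k × ((Fin k × Fin k) → Prop) × ((Fin k × Fin k) → Prop) :=
  (f (S.emb v), upP S f ρ v, downP S f ρ v)

variable (ρ : V → ℕ) (hρ : Function.Injective ρ)

omit hf

lemma phi_fst {a b : V} (he : phi S f ρ a = phi S f ρ b) :
    f (S.emb a) = f (S.emb b) :=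
  congrArg Prod.fst he

include hρ

lemma trans_witness {a b c : V} (h : G.Adj a c)
    (hab : phi S f ρ a = phi S f ρ b) :
    ∃ w, ∃ hw : G.Adj b w, f (S.emb w) = f (S.emb c) ∧ f (mid S hw) = f (mid S h) ∧
      ((ρ a < ρ c ∧ ρ b < ρ w) ∨ (ρ c < ρ a ∧ ρ w < ρ b)) := by
  rcases lt_trichotomy (ρ a) (ρ c) with hlt | heq | hgt
  · have hmem : upP S f ρ a (f (S.emb c), f (mid S h)) := ⟨c, h, hlt, rfl, rfl⟩
    have hcomp : upP S f ρ a = upP S f ρ b := congrArg (fun x => x.2.1) hab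
    rw [hcomp] at hmem
    obtain ⟨w, hw, hlt', hc1, hc2⟩ := hmem
    exact ⟨w, hw, hc1, hc2, Or.inl ⟨hlt, hlt'⟩⟩
  · exact absurd (hρ heq) h.ne
  · have hmem : downP S f ρ a (f (S.emb c), f (mid S h)) := ⟨c, h, hgt, rfl, rfl⟩
    have hcomp : downP S f ρ a = downP S f ρ b := congrArg (fun x => x.2.2) hab
    rw [hcomp] at hmem
    obtain ⟨w, hw, hlt', hc1, hc2⟩ := hmem
    exact ⟨w, hw, hc1, hc2, Or.inr ⟨hgt, hlt'⟩⟩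

include hf

lemma phi_proper {u v : V} (h : G.Adj u v)
    (he : phi S f ρ u = phi S f ρ v) : False := by
  obtain ⟨w, hw, hc1, hc2, hsign⟩ := trans_witness S hlen ρ hρ (b := v) h he
  have hwu : w ≠ u := by
    rintro rfl
    rcases hsign with ⟨ha, hb⟩ | ⟨ha, hb⟩ <;> omega
  exact path4 S hlen hf h hw hwu (phi_fst S hlen ρ he) hc2.symm

lemma phi_p3 {b c d : V} (hbc : G.Adj b c) (hcd : G.Adj c d) (hbd : b ≠ d)
    (he : phi S f ρ b = phi S f ρ d) :
    f (mid S hbc) = f (mid S hcd) := by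
  by_contra hne
  obtain ⟨w, hw, hwc1, hwc2, -⟩ := trans_witness S hlen ρ hρ (b := d) hbc he
  obtain ⟨w', hw', hw'c1, hw'c2, -⟩ := trans_witness S hlen ρ hρ (b := b) hcd.symm he.symm
  replace hw'c2 : f (mid S hw') = f (mid S hcd) := by
    rw [hw'c2, mid_symm S hlen hcd]
  -- hw : G.Adj d w with f (emb w) = f (emb c), f (mid hw) = f (mid hbc)
  -- hw' : G.Adj b w' with f (emb w') = f (emb c), f (mid hw') = f (mid hcd)
  have hwc : w ≠ c := by
    rintro rfl
    apply hne
    have e : mid S hw = mid S hcd := by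
      have e0 : mid S hw = mid S hcd.symm := rfl
      rw [e0, mid_symm S hlen hcd]
    rw [← hwc2, e]
  have hw'c : w' ≠ c := by
    rintro rfl
    apply hne
    have e : mid S hw' = mid S hbc := rfl
    rw [← e, hw'c2]
  by_cases hw'd : w' = d
  · subst hw'd
    exact path4' S hlen hf hcd hw' hbc.ne hbd (phi_fst S hlen ρ he) hw'c2.symm
  · refine path8 S hlen hf hw'.symm hbc hcd hw
      hw'.ne' hw'c hw'd hbc.ne hbd hcd.ne (fun hh => hwc hh.symm)
      hw'c1 (phi_fst S hlen ρ he) ?_ hwc2.symm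
    rw [mid_symm S hlen hw']
    exact hw'c2

omit hρ

lemma exists_acyclic [Fintype V] :
    ∃ φ : V → Fin k × ((Fin k × Fin k) → Prop) × ((Fin k × Fin k) → Prop),
      AcyclicColoring G φ := by
  classical
  set ρ : V → ℕ := fun v => ((Fintype.equivFin V) v : ℕ) with hρdef
  have hρ : Function.Injective ρ := fun x y hxy =>
    (Fintype.equivFin V).injective (Fin.val_injective hxy)
  refine ⟨phi S f ρ, fun u w h he => phi_proper S hlen hf ρ hρ h he, ?_⟩
  intro u p hp
  have hn3 : 3 ≤ p.length := hp.three_le_length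
  have hv0 : p.getVert p.length = p.getVert 0 := by
    rw [SimpleGraph.Walk.getVert_length, SimpleGraph.Walk.getVert_zero]
  have hadj : ∀ t, t < p.length → G.Adj (p.getVert t) (p.getVert (t + 1)) :=
    fun t ht => p.adj_getVert_succ ht
  have hmem : ∀ t, p.getVert t ∈ p.support := getVert_mem_support p
  by_cases h3 : p.length = 3
  · have ha20 : G.Adj (p.getVert 2) (p.getVert 0) := by
      have := hadj 2 (by omega)
      rwa [show (2:ℕ) + 1 = 3 from rfl, show (3:ℕ) = p.length from h3.symm, hv0] at this
    exact ⟨p.getVert 0, hmem 0, p.getVert 1, hmem 1, p.getVert 2, hmem 2,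
      fun he => phi_proper S hlen hf ρ hρ (hadj 0 (by omega)) he,
      fun he => phi_proper S hlen hf ρ hρ ha20 he.symm,
      fun he => phi_proper S hlen hf ρ hρ (hadj 1 (by omega)) he⟩
  · have hn4 : 4 ≤ p.length := by omega
    by_contra hno
    have phieq : ∀ t, t + 2 ≤ p.length →
        phi S f ρ (p.getVert t) = phi S f ρ (p.getVert (t + 2)) := by
      intro t ht
      by_contra hne
      exact hno ⟨p.getVert t, hmem t, p.getVert (t + 1), hmem (t + 1),
        p.getVert (t + 2), hmem (t + 2),
        fun he => phi_proper S hlen hf ρ hρ (hadj t (by omega)) he,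
        hne,
        fun he => phi_proper S hlen hf ρ hρ
          (by rw [show t + 2 = t + 1 + 1 from rfl] at *; exact hadj (t + 1) (by omega)) he⟩
    have hne01 : p.getVert 0 ≠ p.getVert 1 := by
      have := cycle_getVert_injOn hp (i := 1) (j := p.length) (by omega) (by omega) le_rfl
      rw [hv0] at this
      exact this.symm
    have hne02 : p.getVert 0 ≠ p.getVert 2 := by
      have := cycle_getVert_injOn hp (i := 2) (j := p.length) (by omega) (by omega) le_rfl
      rw [hv0] at this
      exact this.symm
    have hne03 : p.getVert 0 ≠ p.getVert 3 := by
      have := cycle_getVert_injOn hp (i := 3) (j := p.length) (by omega) (by omega) le_rfl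
      rw [hv0] at this
      exact this.symm
    have hne12 : p.getVert 1 ≠ p.getVert 2 :=
      cycle_getVert_injOn hp (by omega) (by omega) (by omega)
    have hne13 : p.getVert 1 ≠ p.getVert 3 :=
      cycle_getVert_injOn hp (by omega) (by omega) (by omega)
    have hne23 : p.getVert 2 ≠ p.getVert 3 :=
      cycle_getVert_injOn hp (by omega) (by omega) (by omega)
    have hne24 : p.getVert 2 ≠ p.getVert 4 :=
      cycle_getVert_injOn hp (by omega) (by omega) (by omega)
    have ha0 := hadj 0 (by omega)
    have ha1 := hadj 1 (by omega)
    have ha2 := hadj 2 (by omega)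
    have ha3 := hadj 3 (by omega)
    have j01 : f (mid S ha0) = f (mid S ha1) :=
      phi_p3 S hlen hf ρ hρ ha0 ha1 hne02 (phieq 0 (by omega))
    have j12 : f (mid S ha1) = f (mid S ha2) :=
      phi_p3 S hlen hf ρ hρ ha1 ha2 hne13 (phieq 1 (by omega))
    have j23 : f (mid S ha2) = f (mid S ha3) :=
      phi_p3 S hlen hf ρ hρ ha2 ha3 hne24 (phieq 2 (by omega))
    exact path8 S hlen hf ha0 ha1 ha2 ha3
      hne01 hne02 hne03 hne12 hne13 hne23 hne24
      (phi_fst S hlen ρ (phieq 0 (by omega))) (phi_fst S hlen ρ (phieq 1 (by omega)))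
      (j01.trans j12) (j12.trans j23)

end St15

/-- If the `1`-subdivision `G'` of `G` admits a non-repetitive colouring
with `k` colours, then `χₐ(G) ≤ k·2^{2k²}`. -/
theorem stmt_15 {V W : Type*} [Fintype V] [Fintype W]
    (G : SimpleGraph V) (G' : SimpleGraph W) (hsub : IsExactSubdivision 1 G G')
    (k : ℕ) (f : W → Fin k) (hf : NonRepColoring G' f) :
    chiA G ≤ k * 2 ^ (2 * k ^ 2) := by
  classical
  obtain ⟨S, hlen⟩ := hsub
  have hlen2 : ∀ ⦃a b : V⦄ (h : G.Adj a b), (S.path h).length = 2 := fun a b h => by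
    rw [hlen h]
  obtain ⟨φ, hφ⟩ := St15.exists_acyclic S hlen2 hf
  have hcard : Fintype.card (Fin k × ((Fin k × Fin k) → Prop) × ((Fin k × Fin k) → Prop))
      = k * 2 ^ (2 * k ^ 2) := by
    rw [Fintype.card_prod, Fintype.card_prod, Fintype.card_fun, Fintype.card_prop,
      Fintype.card_prod, Fintype.card_fin, ← pow_add]
    have : k * k + k * k = 2 * k ^ 2 := by ring
    rw [this]
  let e := (Fintype.equivFin
    (Fin k × ((Fin k × Fin k) → Prop) × ((Fin k × Fin k) → Prop))).trans (finCongr hcard)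
  apply Nat.sInf_le
  refine ⟨fun v => e (φ v), fun u w h hh => hφ.1 u w h (e.injective hh), ?_⟩
  intro u c hc
  obtain ⟨x, hx, y, hy, z, hz, h1, h2, h3⟩ := hφ.2 u c hc
  exact ⟨x, hx, y, hy, z, hz, fun hh => h1 (e.injective hh), fun hh => h2 (e.injective hh),
    fun hh => h3 (e.injective hh)⟩
end
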